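/- arXiv:1104.4692 — 5 statements merged into one kernel-verified Lean document; each statement's English description precedes it below -/
import Mathlib

section
/- Let d ≥ 2, let X be a finite nonempty subset of Ω(d), and let 𝒯 be a lower set in ℕ×ℕ. Then X is a complex spherical 𝒯-design if and only if Σ_{x,y∈X} g_{k,l}(x^*y) = 0 for every (k,l) ∈ 𝒯 with (k,l) ≠ (0,0). -/
open Finset

/-- The Hermitian inner product `x^* y = ∑ i, conj (x i) * y i` on `ℂ^d`. -/
noncomputable def cInner {d : ℕ} (x y : Fin d → ℂ) : ℂ :=
  ∑ i, (starRingEnd ℂ) (x i) * y i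

/-- A lower set in `ℕ × ℕ` with respect to the product order. -/
def IsLowerSet' (T : Finset (ℕ × ℕ)) : Prop :=
  ∀ kl ∈ T, ∀ mn : ℕ × ℕ, mn.1 ≤ kl.1 → mn.2 ≤ kl.2 → mn ∈ T

/-- The average over the unit sphere `Ω(d)` of the monomial
`z ↦ ∏ i, z i ^ a i * conj (z i) ^ b i`. -/
noncomputable def monomialAvg (d : ℕ) (a b : Fin d → ℕ) : ℂ :=
  if a = b then
    ((Nat.factorial (d - 1) : ℂ) * ∏ i, (Nat.factorial (a i) : ℂ)) /
      (Nat.factorial (d + (∑ i, a i) - 1) : ℂ)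
  else 0

/-- `X` is a complex spherical `T`-design: every monomial of bidegree `(k,l) ∈ T`
has the same average over `X` as over the sphere `Ω(d)`. -/
def IsDesign (d : ℕ) (X : Finset (Fin d → ℂ)) (T : Finset (ℕ × ℕ)) : Prop :=
  ∀ kl ∈ T, ∀ a b : Fin d → ℕ, (∑ i, a i) = kl.1 → (∑ i, b i) = kl.2 →
    (∑ z ∈ X, (∏ i, (z i) ^ (a i)) * ∏ i, ((starRingEnd ℂ) (z i)) ^ (b i))
      = (X.card : ℂ) * monomialAvg d a b

/-- The Jacobi polynomial `g_{k,l}` for the complex sphere in dimension `d`. -/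
noncomputable def jacobi (d k l : ℕ) (x : ℂ) : ℂ :=
  (((d + k + l - 1 : ℕ) : ℂ) / (Nat.factorial (d - 1) : ℂ)) *
    ∑ r ∈ Finset.range (min k l + 1),
      (((-1 : ℂ) ^ r * (Nat.factorial (d + k + l - r - 2) : ℂ)) /
          ((Nat.factorial r : ℂ) * (Nat.factorial (k - r) : ℂ) *
            (Nat.factorial (l - r) : ℂ))) *
        x ^ (k - r) * ((starRingEnd ℂ) x) ^ (l - r)

open scoped Classical in
/-- The inner product set `A(X) = {x^* y : x, y ∈ X, x ≠ y}`. -/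
noncomputable def innerSet {d : ℕ} (X : Finset (Fin d → ℂ)) : Finset ℂ :=
  ((X ×ˢ X).filter fun p => p.1 ≠ p.2).image fun p => cInner p.1 p.2

/-- `m_{k,l}`, the dimension of the harmonic space `Harm(k,l)` in dimension `d`. -/
def mdim (d k l : ℕ) : ℕ :=
  (d + k - 1).choose (d - 1) * (d + l - 1).choose (d - 1) -
    (d + k - 2).choose (d - 1) * (d + l - 2).choose (d - 1)

/-- The convolution `U * V = {(k + l', k' + l) : (k,l) ∈ U, (k',l') ∈ V}`. -/
def convSet (U V : Finset (ℕ × ℕ)) : Finset (ℕ × ℕ) :=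
  (U ×ˢ V).image fun p => (p.1.1 + p.2.2, p.2.1 + p.1.2)

/-- `X` is an `S`-code: it has an annihilator polynomial supported on monomials
`x^k * conj x^l` with `(k,l) ∈ S`. -/
def IsCode (d : ℕ) (X : Finset (Fin d → ℂ)) (S : Finset (ℕ × ℕ)) : Prop :=
  ∃ c : ℕ × ℕ → ℝ,
    (∀ α ∈ innerSet X, ∑ kl ∈ S, (c kl : ℂ) * α ^ kl.1 * ((starRingEnd ℂ) α) ^ kl.2 = 0) ∧
    0 < ∑ kl ∈ S, c kl

open scoped Classical

namespace DesignAux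

variable {d : ℕ}

noncomputable def M (X : Finset (Fin d → ℂ)) (a b : Fin d → ℕ) : ℂ :=
  ∑ z ∈ X, (∏ i, (z i) ^ (a i)) * ∏ i, ((starRingEnd ℂ) (z i)) ^ (b i)

noncomputable def S (X : Finset (Fin d → ℂ)) (k l : ℕ) : ℂ :=
  ∑ x ∈ X, ∑ y ∈ X, (cInner x y) ^ k * ((starRingEnd ℂ) (cInner x y)) ^ l

def A (d k : ℕ) : Finset (Fin d → ℕ) := Finset.piAntidiag Finset.univ k

noncomputable def Sr (X : Finset (Fin d → ℂ)) (k l : ℕ) : ℝ :=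
  ∑ a ∈ A d k, ∑ b ∈ A d l,
    ((Nat.multinomial Finset.univ a : ℝ) * (Nat.multinomial Finset.univ b : ℝ)) *
      Complex.normSq (M X a b)

noncomputable def sig (d N k l : ℕ) : ℝ :=
  if k = l then (N : ℝ) ^ 2 / ((d + k - 1).choose k : ℝ) else 0

def DesignAt (X : Finset (Fin d → ℂ)) (k l : ℕ) : Prop :=
  ∀ a b : Fin d → ℕ, (∑ i, a i) = k → (∑ i, b i) = l →
    M X a b = (X.card : ℂ) * monomialAvg d a b

lemma mem_A {a : Fin d → ℕ} {k : ℕ} : a ∈ A d k ↔ ∑ i, a i = k := by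
  simp [A]

lemma conj_cInner (x y : Fin d → ℂ) : (starRingEnd ℂ) (cInner x y) = cInner y x := by
  simp only [cInner, map_sum, map_mul, RingHomCompTriple.comp_apply, RingHom.id_apply,
    Complex.conj_conj]
  exact Finset.sum_congr rfl fun i _ => mul_comm _ _

lemma cInner_pow (x y : Fin d → ℂ) (k : ℕ) :
    (cInner x y) ^ k = ∑ a ∈ A d k, (Nat.multinomial Finset.univ a : ℂ) *
      ((∏ i, ((starRingEnd ℂ) (x i)) ^ (a i)) * ∏ i, (y i) ^ (a i)) := by
  rw [cInner, Finset.sum_pow_eq_sum_piAntidiag]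
  refine Finset.sum_congr rfl fun a _ => ?_
  rw [← Finset.prod_mul_distrib]
  simp [mul_pow]

lemma M_conj (X : Finset (Fin d → ℂ)) (a b : Fin d → ℕ) :
    M X b a = (starRingEnd ℂ) (M X a b) := by
  simp only [M, map_sum, map_mul, map_prod, map_pow, Complex.conj_conj]
  exact Finset.sum_congr rfl fun z _ => mul_comm _ _

lemma sum4_swap {α β γ δ : Type*} (s : Finset α) (t : Finset β) (u : Finset γ) (v : Finset δ)
    (f : α → β → γ → δ → ℂ) :
    ∑ x ∈ s, ∑ y ∈ t, ∑ a ∈ u, ∑ b ∈ v, f x y a b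
      = ∑ a ∈ u, ∑ b ∈ v, ∑ x ∈ s, ∑ y ∈ t, f x y a b :=
  calc ∑ x ∈ s, ∑ y ∈ t, ∑ a ∈ u, ∑ b ∈ v, f x y a b
      = ∑ x ∈ s, ∑ a ∈ u, ∑ y ∈ t, ∑ b ∈ v, f x y a b :=
        Finset.sum_congr rfl fun x _ => Finset.sum_comm
    _ = ∑ a ∈ u, ∑ x ∈ s, ∑ y ∈ t, ∑ b ∈ v, f x y a b := Finset.sum_comm
    _ = ∑ a ∈ u, ∑ x ∈ s, ∑ b ∈ v, ∑ y ∈ t, f x y a b :=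
        Finset.sum_congr rfl fun a _ => Finset.sum_congr rfl fun x _ => Finset.sum_comm
    _ = ∑ a ∈ u, ∑ b ∈ v, ∑ x ∈ s, ∑ y ∈ t, f x y a b :=
        Finset.sum_congr rfl fun a _ => Finset.sum_comm

lemma S_eq_Sr (X : Finset (Fin d → ℂ)) (k l : ℕ) : S X k l = (Sr X k l : ℂ) := by
  have step1 : S X k l = ∑ a ∈ A d k, ∑ b ∈ A d l,
      ((Nat.multinomial Finset.univ a : ℂ) * (Nat.multinomial Finset.univ b : ℂ)) *
        (M X b a * M X a b) :=
    calc S X k l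
        = ∑ x ∈ X, ∑ y ∈ X, ∑ a ∈ A d k, ∑ b ∈ A d l,
            ((Nat.multinomial Finset.univ a : ℂ) * (Nat.multinomial Finset.univ b : ℂ)) *
            (((∏ i, (x i) ^ (b i)) * ∏ i, ((starRingEnd ℂ) (x i)) ^ (a i)) *
             ((∏ i, (y i) ^ (a i)) * ∏ i, ((starRingEnd ℂ) (y i)) ^ (b i))) := by
          refine Finset.sum_congr rfl fun x _ => Finset.sum_congr rfl fun y _ => ?_
          rw [conj_cInner, cInner_pow, cInner_pow, Finset.sum_mul_sum]
          exact Finset.sum_congr rfl fun a _ => Finset.sum_congr rfl fun b _ => by ring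
      _ = ∑ a ∈ A d k, ∑ b ∈ A d l, ∑ x ∈ X, ∑ y ∈ X,
            ((Nat.multinomial Finset.univ a : ℝ) * (Nat.multinomial Finset.univ b : ℝ) : ℂ) *
            (((∏ i, (x i) ^ (b i)) * ∏ i, ((starRingEnd ℂ) (x i)) ^ (a i)) *
             ((∏ i, (y i) ^ (a i)) * ∏ i, ((starRingEnd ℂ) (y i)) ^ (b i))) := by
          push_cast
          exact sum4_swap _ _ _ _ _
      _ = ∑ a ∈ A d k, ∑ b ∈ A d l,
            ((Nat.multinomial Finset.univ a : ℂ) * (Nat.multinomial Finset.univ b : ℂ)) *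
            (M X b a * M X a b) := by
          refine Finset.sum_congr rfl fun a _ => Finset.sum_congr rfl fun b _ => ?_
          push_cast
          rw [M, M, Finset.sum_mul_sum, Finset.mul_sum]
          refine Finset.sum_congr rfl fun x _ => ?_
          rw [Finset.mul_sum]
  rw [step1]
  push_cast [Sr]
  refine Finset.sum_congr rfl fun a _ => Finset.sum_congr rfl fun b _ => ?_
  rw [M_conj, Complex.normSq_eq_conj_mul_self]

noncomputable def Mre (X : Finset (Fin d → ℂ)) (a : Fin d → ℕ) : ℝ :=
  ∑ z ∈ X, ∏ i, (Complex.normSq (z i)) ^ (a i)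

lemma Mre_nonneg (X : Finset (Fin d → ℂ)) (a : Fin d → ℕ) : 0 ≤ Mre X a :=
  Finset.sum_nonneg fun z _ => Finset.prod_nonneg fun i _ =>
    pow_nonneg (Complex.normSq_nonneg _) _

lemma M_diag (X : Finset (Fin d → ℂ)) (a : Fin d → ℕ) : M X a a = ((Mre X a : ℝ) : ℂ) := by
  push_cast [M, Mre]
  refine Finset.sum_congr rfl fun z _ => ?_
  rw [← Finset.prod_mul_distrib]
  refine Finset.prod_congr rfl fun i _ => ?_
  rw [← mul_pow, Complex.mul_conj]

lemma trace (X : Finset (Fin d → ℂ)) (h1 : ∀ x ∈ X, cInner x x = 1) (k : ℕ) :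
    ∑ a ∈ A d k, (Nat.multinomial Finset.univ a : ℝ) * Mre X a = X.card := by
  have hC : ∑ a ∈ A d k, (Nat.multinomial Finset.univ a : ℂ) * ((Mre X a : ℝ) : ℂ)
      = (X.card : ℂ) := by
    have : ∀ a ∈ A d k, (Nat.multinomial Finset.univ a : ℂ) * ((Mre X a : ℝ) : ℂ)
        = (Nat.multinomial Finset.univ a : ℂ) * M X a a := by
      intro a _; rw [M_diag]
    rw [Finset.sum_congr rfl this]
    have h2 : ∑ a ∈ A d k, (Nat.multinomial Finset.univ a : ℂ) * M X a a
        = ∑ z ∈ X, (cInner z z) ^ k := by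
      simp only [M, Finset.mul_sum]
      rw [Finset.sum_comm]
      refine Finset.sum_congr rfl fun z _ => ?_
      rw [cInner_pow]
      exact Finset.sum_congr rfl fun a _ => by ring
    rw [h2]
    rw [Finset.sum_congr rfl fun z hz => by rw [h1 z hz]]
    simp
  have := hC
  rw [show ((X.card : ℂ)) = (((X.card : ℝ) : ℂ)) by push_cast; ring] at this
  have h3 : ((∑ a ∈ A d k, (Nat.multinomial Finset.univ a : ℝ) * Mre X a : ℝ) : ℂ)
      = (((X.card : ℝ)) : ℂ) := by
    push_cast
    exact this
  exact_mod_cast h3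

lemma card_A (k : ℕ) : (A d k).card = (d + k - 1).choose k := by
  rw [A, ← Finset.map_sym_eq_piAntidiag, Finset.card_map, Finset.sym_univ, Finset.card_univ,
    Sym.card_sym_eq_choose]
  simp

lemma choose_fact (hd : 2 ≤ d) (k : ℕ) :
    ((d + k - 1).choose k) * (Nat.factorial k * Nat.factorial (d - 1))
      = Nat.factorial (d + k - 1) := by
  have h1 : k ≤ d + k - 1 := by omega
  have := Nat.choose_mul_factorial_mul_factorial h1
  rw [show d + k - 1 - k = d - 1 by omega] at this
  rw [← this]; ring

lemma mult_spec (a : Fin d → ℕ) (k : ℕ) (ha : ∑ i, a i = k) :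
    (∏ i, Nat.factorial (a i)) * Nat.multinomial Finset.univ a = Nat.factorial k := by
  have := Nat.multinomial_spec Finset.univ a
  rwa [ha] at this

lemma monomialAvg_diag (a : Fin d → ℕ) (k : ℕ) (ha : ∑ i, a i = k) :
    monomialAvg d a a =
      (((((d-1).factorial * ∏ i, (a i).factorial : ℕ) : ℝ) / ((d + k - 1).factorial : ℕ) : ℝ) : ℂ) := by
  rw [monomialAvg, if_pos rfl, ha]
  push_cast
  ring

lemma design_to_S (hd : 2 ≤ d) (X : Finset (Fin d → ℂ)) (k l : ℕ) (h : DesignAt X k l) :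
    Sr X k l = sig d X.card k l := by
  by_cases hkl : k = l
  · subst hkl
    have hDpos : (0:ℝ) < ((d + k - 1).choose k : ℝ) := by
      exact_mod_cast Nat.choose_pos (show k ≤ d + k - 1 by omega)
    have hGpos : (0:ℝ) < (((d + k - 1).factorial : ℕ) : ℝ) := by
      exact_mod_cast Nat.factorial_pos _
    rw [Sr, sig, if_pos rfl]
    have hterm : ∀ a ∈ A d k,
        (∑ b ∈ A d k, ((Nat.multinomial Finset.univ a : ℝ) * (Nat.multinomial Finset.univ b : ℝ)) *
          Complex.normSq (M X a b))
        = ((X.card:ℝ))^2 / ((d + k - 1).choose k : ℝ)^2 := by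
      intro a ha
      rw [Finset.sum_eq_single_of_mem a ha ?_]
      · rw [h a a (mem_A.1 ha) (mem_A.1 ha), monomialAvg_diag a k (mem_A.1 ha),
          show ((X.card : ℂ)) = (((X.card:ℝ)):ℂ) by push_cast; ring, ← Complex.ofReal_mul,
          Complex.normSq_ofReal]
        have hnat : (Nat.multinomial Finset.univ a) *
            ((d-1).factorial * ∏ i, (a i).factorial) * ((d + k - 1).choose k)
            = (d + k - 1).factorial := by
          calc (Nat.multinomial Finset.univ a) *
                ((d-1).factorial * ∏ i, (a i).factorial) * ((d + k - 1).choose k)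
              = ((d + k - 1).choose k) * (((∏ i, (a i).factorial) *
                  (Nat.multinomial Finset.univ a)) * (d-1).factorial) := by ring
            _ = ((d + k - 1).choose k) * ((k.factorial) * (d-1).factorial) := by
                rw [mult_spec a k (mem_A.1 ha)]
            _ = (d + k - 1).factorial := choose_fact hd k
        have hkey : (Nat.multinomial Finset.univ a : ℝ) *
            ((((d-1).factorial * ∏ i, (a i).factorial : ℕ) : ℝ) /
              (((d + k - 1).factorial : ℕ) : ℝ))
            = 1 / ((d + k - 1).choose k : ℝ) := by
          rw [mul_div_assoc'] at *
          rw [div_eq_div_iff hGpos.ne' hDpos.ne']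
          rw [one_mul]
          exact_mod_cast hnat
        calc (Nat.multinomial Finset.univ a : ℝ) * (Nat.multinomial Finset.univ a : ℝ) *
              (((X.card:ℝ) * ((((d-1).factorial * ∏ i, (a i).factorial : ℕ) : ℝ) /
                (((d + k - 1).factorial : ℕ) : ℝ))) *
               ((X.card:ℝ) * ((((d-1).factorial * ∏ i, (a i).factorial : ℕ) : ℝ) /
                (((d + k - 1).factorial : ℕ) : ℝ))))
            = ((Nat.multinomial Finset.univ a : ℝ) *
                ((((d-1).factorial * ∏ i, (a i).factorial : ℕ) : ℝ) /
                  (((d + k - 1).factorial : ℕ) : ℝ)))^2 * (X.card:ℝ)^2 := by ring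
          _ = (1 / ((d + k - 1).choose k : ℝ))^2 * (X.card:ℝ)^2 := by rw [hkey]
          _ = ((X.card:ℝ))^2 / ((d + k - 1).choose k : ℝ)^2 := by ring
      · intro b hb hba
        rw [h a b (mem_A.1 ha) (mem_A.1 hb), monomialAvg,
          if_neg (fun hh => hba hh.symm), mul_zero, Complex.normSq_zero, mul_zero]
    rw [Finset.sum_congr rfl hterm, Finset.sum_const, card_A, nsmul_eq_mul]
    field_simp
  · rw [sig, if_neg hkl, Sr]
    refine Finset.sum_eq_zero fun a ha => Finset.sum_eq_zero fun b hb => ?_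
    have hab : a ≠ b := fun hh => hkl (by rw [← mem_A.1 ha, ← mem_A.1 hb, hh])
    rw [h a b (mem_A.1 ha) (mem_A.1 hb), monomialAvg, if_neg hab, mul_zero,
      Complex.normSq_zero, mul_zero]

lemma S_to_design (hd : 2 ≤ d) (X : Finset (Fin d → ℂ)) (h1 : ∀ x ∈ X, cInner x x = 1)
    (k l : ℕ) (hS : Sr X k l = sig d X.card k l) : DesignAt X k l := by
  by_cases hkl : k = l
  · subst hkl
    have hDpos : (0:ℝ) < ((d + k - 1).choose k : ℝ) := by
      exact_mod_cast Nat.choose_pos (show k ≤ d + k - 1 by omega)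
    rw [sig, if_pos rfl] at hS
    set N : ℝ := (X.card : ℝ) with hN
    set D : ℝ := ((d + k - 1).choose k : ℝ) with hD
    set u : (Fin d → ℕ) → ℝ :=
      fun a => (Nat.multinomial Finset.univ a : ℝ) * Mre X a with hu
    have htr : ∑ a ∈ A d k, u a = N := trace X h1 k
    have hdiag : ∀ a ∈ A d k,
        ((Nat.multinomial Finset.univ a : ℝ) * (Nat.multinomial Finset.univ a : ℝ)) *
          Complex.normSq (M X a a) = (u a)^2 := by
      intro a _
      rw [M_diag, Complex.normSq_ofReal, hu]
      ring
    have hsplit : Sr X k k = (∑ a ∈ A d k, (u a)^2) +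
        ∑ a ∈ A d k, ∑ b ∈ (A d k).erase a,
          ((Nat.multinomial Finset.univ a : ℝ) * (Nat.multinomial Finset.univ b : ℝ)) *
            Complex.normSq (M X a b) := by
      rw [Sr, ← Finset.sum_add_distrib]
      refine Finset.sum_congr rfl fun a ha => ?_
      rw [← hdiag a ha,
        Finset.add_sum_erase _ (fun b => ((Nat.multinomial Finset.univ a : ℝ) *
          (Nat.multinomial Finset.univ b : ℝ)) * Complex.normSq (M X a b)) ha]
    have hoffnn : 0 ≤ ∑ a ∈ A d k, ∑ b ∈ (A d k).erase a,
        ((Nat.multinomial Finset.univ a : ℝ) * (Nat.multinomial Finset.univ b : ℝ)) *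
          Complex.normSq (M X a b) := by
      refine Finset.sum_nonneg fun a _ => Finset.sum_nonneg fun b _ => ?_
      have : (0:ℝ) ≤ (Nat.multinomial Finset.univ a : ℝ) * (Nat.multinomial Finset.univ b : ℝ) := by
        positivity
      exact mul_nonneg this (Complex.normSq_nonneg _)
    have hcard : ((A d k).card : ℝ) = D := by rw [card_A, hD]
    have hsq : ∑ a ∈ A d k, (u a - N / D)^2 = (∑ a ∈ A d k, (u a)^2) - N^2 / D := by
      calc ∑ a ∈ A d k, (u a - N/D)^2
          = ∑ a ∈ A d k, ((u a)^2 - 2*(N/D)* u a + (N/D)^2) :=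
            Finset.sum_congr rfl fun a _ => by ring
        _ = (∑ a ∈ A d k, (u a)^2) - 2*(N/D)*(∑ a ∈ A d k, u a)
              + ((A d k).card : ℝ) * (N/D)^2 := by
            rw [Finset.sum_add_distrib, Finset.sum_sub_distrib, ← Finset.mul_sum,
              Finset.sum_const, nsmul_eq_mul]
        _ = (∑ a ∈ A d k, (u a)^2) - N^2/D := by
            rw [htr, hcard]
            field_simp
            ring
    have hsqnn : 0 ≤ ∑ a ∈ A d k, (u a - N / D)^2 :=
      Finset.sum_nonneg fun a _ => sq_nonneg _
    have husq : (∑ a ∈ A d k, (u a)^2) = N^2 / D := by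
      have hle : (∑ a ∈ A d k, (u a)^2) ≤ N^2 / D := by
        rw [hsplit] at hS; linarith
      have hge : N^2 / D ≤ ∑ a ∈ A d k, (u a)^2 := by
        rw [hsq] at hsqnn; linarith
      linarith
    have hoffzero : ∑ a ∈ A d k, ∑ b ∈ (A d k).erase a,
        ((Nat.multinomial Finset.univ a : ℝ) * (Nat.multinomial Finset.univ b : ℝ)) *
          Complex.normSq (M X a b) = 0 := by
      rw [hsplit, husq] at hS; linarith
    have huall : ∀ a ∈ A d k, u a = N / D := by
      intro a ha
      have hzero : ∑ a ∈ A d k, (u a - N / D)^2 = 0 := by rw [hsq, husq]; ring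
      have := (Finset.sum_eq_zero_iff_of_nonneg (fun a _ => sq_nonneg (u a - N/D))).1 hzero a ha
      have := pow_eq_zero_iff (n := 2) (by norm_num) |>.1 this
      linarith [this]
    have hMoff : ∀ a ∈ A d k, ∀ b ∈ A d k, a ≠ b → M X a b = 0 := by
      intro a ha b hb hab
      have h2 := (Finset.sum_eq_zero_iff_of_nonneg (fun a ha => Finset.sum_nonneg fun b _ =>
        mul_nonneg (by positivity) (Complex.normSq_nonneg _))).1 hoffzero a ha
      have h3 := (Finset.sum_eq_zero_iff_of_nonneg (fun b _ =>
        mul_nonneg (by positivity) (Complex.normSq_nonneg _))).1 h2 b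
        (Finset.mem_erase.2 ⟨hab.symm, hb⟩)
      have hmne : ((Nat.multinomial Finset.univ a : ℝ) * (Nat.multinomial Finset.univ b : ℝ)) ≠ 0 := by
        have := Nat.multinomial_pos Finset.univ a
        have := Nat.multinomial_pos Finset.univ b
        positivity
      have := (mul_eq_zero.1 h3).resolve_left hmne
      exact Complex.normSq_eq_zero.1 this
    intro a b ha hb
    by_cases hab : a = b
    · subst hab
      rw [M_diag, monomialAvg_diag a k ha]
      have hu_a : u a = N / D := huall a (mem_A.2 ha)
      have hmpos : (0:ℝ) < (Nat.multinomial Finset.univ a : ℝ) := by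
        exact_mod_cast Nat.multinomial_pos Finset.univ a
      have hGpos : (0:ℝ) < (((d + k - 1).factorial : ℕ) : ℝ) := by
        exact_mod_cast Nat.factorial_pos _
      have hnat : (Nat.multinomial Finset.univ a) *
          ((d-1).factorial * ∏ i, (a i).factorial) * ((d + k - 1).choose k)
          = (d + k - 1).factorial := by
        calc (Nat.multinomial Finset.univ a) *
              ((d-1).factorial * ∏ i, (a i).factorial) * ((d + k - 1).choose k)
            = ((d + k - 1).choose k) * (((∏ i, (a i).factorial) *
                (Nat.multinomial Finset.univ a)) * (d-1).factorial) := by ring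
          _ = ((d + k - 1).choose k) * ((k.factorial) * (d-1).factorial) := by
              rw [mult_spec a k ha]
          _ = (d + k - 1).factorial := choose_fact hd k
      have hnatR : (Nat.multinomial Finset.univ a : ℝ) *
          ((((d-1).factorial * ∏ i, (a i).factorial : ℕ)) : ℝ) * D
          = (((d + k - 1).factorial : ℕ) : ℝ) := by
        rw [hD]; exact_mod_cast hnat
      have hre : Mre X a = N * (((((d-1).factorial * ∏ i, (a i).factorial : ℕ)) : ℝ) /
          (((d + k - 1).factorial : ℕ) : ℝ)) := by
        have h5 : (Nat.multinomial Finset.univ a : ℝ) * Mre X a = N / D := hu_a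
        rw [eq_div_iff hDpos.ne'] at h5
        rw [mul_div_assoc', eq_div_iff hGpos.ne', ← hnatR]
        calc Mre X a * ((Nat.multinomial Finset.univ a : ℝ) *
              ((((d-1).factorial * ∏ i, (a i).factorial : ℕ)) : ℝ) * D)
            = ((Nat.multinomial Finset.univ a : ℝ) * Mre X a * D) *
              ((((d-1).factorial * ∏ i, (a i).factorial : ℕ)) : ℝ) := by ring
          _ = _ := by rw [h5]
      rw [show ((X.card : ℂ)) = ((N : ℝ) : ℂ) by rw [hN]; push_cast; ring,
        ← Complex.ofReal_mul, hre]
    · rw [monomialAvg, if_neg hab, mul_zero]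
      exact hMoff a (mem_A.2 ha) b (mem_A.2 hb) hab
  · intro a b ha hb
    have hab : a ≠ b := fun hh => hkl (by rw [← ha, ← hb, hh])
    rw [monomialAvg, if_neg hab, mul_zero]
    rw [sig, if_neg hkl] at hS
    have h2 := (Finset.sum_eq_zero_iff_of_nonneg (fun a _ => Finset.sum_nonneg fun b _ =>
      mul_nonneg (by positivity) (Complex.normSq_nonneg _))).1 hS a (mem_A.2 ha)
    have h3 := (Finset.sum_eq_zero_iff_of_nonneg (fun b _ =>
      mul_nonneg (by positivity) (Complex.normSq_nonneg _))).1 h2 b (mem_A.2 hb)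
    have hmne : ((Nat.multinomial Finset.univ a : ℝ) * (Nat.multinomial Finset.univ b : ℝ)) ≠ 0 := by
      have := Nat.multinomial_pos Finset.univ a
      have := Nat.multinomial_pos Finset.univ b
      positivity
    exact Complex.normSq_eq_zero.1 ((mul_eq_zero.1 h3).resolve_left hmne)

open Polynomial in
lemma alt_sum_poly (m : ℕ) (P : Polynomial ℝ) (hP : P.natDegree < m) :
    ∑ r ∈ Finset.range (m + 1), (-1 : ℝ)^r * (m.choose r : ℝ) * P.eval (r : ℝ) = 0 := by
  induction m generalizing P with
  | zero => exact absurd hP (Nat.not_lt_zero _)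
  | succ m ih =>
    set Q : Polynomial ℝ := P - P.comp (X + C 1) with hQ
    have hQeval : ∀ r : ℝ, Q.eval r = P.eval r - P.eval (r + 1) := by
      intro r
      simp [hQ, eval_comp]
    have key : ∑ r ∈ Finset.range (m + 2), (-1:ℝ)^r * ((m+1).choose r : ℝ) * P.eval (r:ℝ)
        = ∑ r ∈ Finset.range (m + 1), (-1:ℝ)^r * (m.choose r : ℝ) * Q.eval (r:ℝ) := by
      have e1 : ∑ r ∈ Finset.range (m + 2), (-1:ℝ)^r * ((m+1).choose r : ℝ) * P.eval (r:ℝ)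
          = (∑ i ∈ Finset.range (m + 1),
              (-1:ℝ)^(i+1) * (((m+1).choose (i+1) : ℕ) : ℝ) * P.eval ((i:ℝ)+1))
            + P.eval 0 := by
        rw [Finset.sum_range_succ'
          (fun r => (-1:ℝ)^r * ((m+1).choose r : ℝ) * P.eval (r:ℝ)) (m+1)]
        push_cast
        norm_num
      have e2 : ∑ i ∈ Finset.range (m + 1),
            (-1:ℝ)^(i+1) * (((m+1).choose (i+1) : ℕ) : ℝ) * P.eval ((i:ℝ)+1)
          = (∑ i ∈ Finset.range (m + 1),
              -((-1:ℝ)^i * ((m.choose i : ℕ) : ℝ) * P.eval ((i:ℝ)+1)))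
            + (∑ i ∈ Finset.range (m + 1),
              (-1:ℝ)^(i+1) * ((m.choose (i+1) : ℕ) : ℝ) * P.eval ((i:ℝ)+1)) := by
        rw [← Finset.sum_add_distrib]
        refine Finset.sum_congr rfl fun i _ => ?_
        rw [Nat.choose_succ_succ]
        push_cast
        ring
      have e3 : ∑ i ∈ Finset.range (m + 1),
            (-1:ℝ)^(i+1) * ((m.choose (i+1) : ℕ) : ℝ) * P.eval ((i:ℝ)+1)
          = (∑ r ∈ Finset.range (m + 1), (-1:ℝ)^r * (m.choose r : ℝ) * P.eval (r:ℝ))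
            - P.eval 0 := by
        have e4 := Finset.sum_range_succ'
          (fun r => (-1:ℝ)^r * ((m.choose r : ℕ) : ℝ) * P.eval (r:ℝ)) (m+1)
        have e5 : ∑ r ∈ Finset.range (m + 2), (-1:ℝ)^r * ((m.choose r : ℕ) : ℝ) * P.eval (r:ℝ)
            = ∑ r ∈ Finset.range (m + 1), (-1:ℝ)^r * ((m.choose r : ℕ) : ℝ) * P.eval (r:ℝ) := by
          rw [Finset.sum_range_succ, Nat.choose_succ_self]
          norm_num
        rw [e5] at e4
        have e6 : ∀ i ∈ Finset.range (m+1),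
            (-1:ℝ)^(i+1) * ((m.choose (i+1) : ℕ) : ℝ) * P.eval ((i:ℝ)+1)
            = (fun r => (-1:ℝ)^r * ((m.choose r : ℕ) : ℝ) * P.eval (r:ℝ)) (i+1) := by
          intro i _
          push_cast
          ring
        rw [Finset.sum_congr rfl e6, e4]
        norm_num
      rw [e1, e2, e3]
      have : ∀ r ∈ Finset.range (m+1), (-1:ℝ)^r * (m.choose r : ℝ) * Q.eval (r:ℝ)
          = (-1:ℝ)^r * (m.choose r : ℝ) * P.eval (r:ℝ)
            - (-1:ℝ)^r * (m.choose r : ℝ) * P.eval ((r:ℝ)+1) := by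
        intro r _
        rw [hQeval]
        ring
      rw [Finset.sum_congr rfl this, Finset.sum_sub_distrib, Finset.sum_neg_distrib]
      ring
    rw [key]
    by_cases hQ0 : Q = 0
    · simp [hQ0]
    · refine ih Q ?_
      have hPdeg : P.natDegree ≠ 0 := by
        intro h0
        obtain ⟨c, rfl⟩ := Polynomial.natDegree_eq_zero.1 h0
        simp [hQ] at hQ0
      have hPne : P ≠ 0 := fun h => hPdeg (by simp [h])
      have hlc : P.leadingCoeff = (P.comp (X + C 1)).leadingCoeff := by
        rw [Polynomial.leadingCoeff_comp (by rw [Polynomial.natDegree_X_add_C]; norm_num),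
          Polynomial.leadingCoeff_X_add_C, one_pow, mul_one]
      have hcompne : P.comp (X + C 1) ≠ 0 := by
        intro h
        rw [h, Polynomial.leadingCoeff_zero] at hlc
        exact hPne (Polynomial.leadingCoeff_eq_zero.1 hlc)
      have hdegeq : P.degree = (P.comp (X + C 1)).degree := by
        rw [Polynomial.degree_eq_natDegree hPne, Polynomial.degree_eq_natDegree hcompne,
          Polynomial.natDegree_comp, Polynomial.natDegree_X_add_C, mul_one]
      have hdlt : Q.degree < P.degree := Polynomial.degree_sub_lt hdegeq hPne hlc
      have := Polynomial.natDegree_lt_natDegree hQ0 hdlt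
      omega

noncomputable def coeff (d k l r : ℕ) : ℂ :=
  ((-1 : ℂ) ^ r * (Nat.factorial (d + k + l - r - 2) : ℂ)) /
    ((Nat.factorial r : ℂ) * (Nat.factorial (k - r) : ℂ) * (Nat.factorial (l - r) : ℂ))

lemma sum3_swap {α γ : Type*} (s t : Finset α) (u : Finset γ) (f : α → α → γ → ℂ) :
    ∑ x ∈ s, ∑ y ∈ t, ∑ r ∈ u, f x y r = ∑ r ∈ u, ∑ x ∈ s, ∑ y ∈ t, f x y r :=
  calc ∑ x ∈ s, ∑ y ∈ t, ∑ r ∈ u, f x y r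
      = ∑ x ∈ s, ∑ r ∈ u, ∑ y ∈ t, f x y r :=
        Finset.sum_congr rfl fun x _ => Finset.sum_comm
    _ = ∑ r ∈ u, ∑ x ∈ s, ∑ y ∈ t, f x y r := Finset.sum_comm

lemma jacobi_sum (X : Finset (Fin d → ℂ)) (k l : ℕ) :
    ∑ x ∈ X, ∑ y ∈ X, jacobi d k l (cInner x y) =
      (((d + k + l - 1 : ℕ) : ℂ) / (Nat.factorial (d - 1) : ℂ)) *
        ∑ r ∈ Finset.range (min k l + 1), coeff d k l r * S X (k - r) (l - r) := by
  have hx : ∀ x y : Fin d → ℂ, jacobi d k l (cInner x y) =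
      ∑ r ∈ Finset.range (min k l + 1),
        (((d + k + l - 1 : ℕ) : ℂ) / (Nat.factorial (d - 1) : ℂ)) *
          (coeff d k l r *
            ((cInner x y) ^ (k - r) * ((starRingEnd ℂ) (cInner x y)) ^ (l - r))) := by
    intro x y
    rw [jacobi, Finset.mul_sum]
    exact Finset.sum_congr rfl fun r _ => by rw [coeff]; ring
  rw [Finset.sum_congr rfl fun x _ => Finset.sum_congr rfl fun y _ => hx x y, sum3_swap,
    Finset.mul_sum]
  refine Finset.sum_congr rfl fun r _ => ?_
  rw [S, Finset.mul_sum, Finset.mul_sum]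
  refine Finset.sum_congr rfl fun x _ => ?_
  rw [← Finset.mul_sum, ← Finset.mul_sum]

open Polynomial in
lemma alt_asc (m c : ℕ) (hm : 1 ≤ m) :
    ∑ r ∈ Finset.range (m + 1),
      (-1:ℝ)^r * ((m.choose r * (c + m - r).ascFactorial (m-1) : ℕ) : ℝ) = 0 := by
  set P : Polynomial ℝ := (ascPochhammer ℝ (m-1)).comp (C ((c + m : ℕ) : ℝ) - X) with hPdef
  have hdeg : P.natDegree < m := by
    have h1 : (C ((c + m : ℕ) : ℝ) - X).natDegree = 1 := by
      rw [show C ((c + m : ℕ) : ℝ) - X = -(X - C ((c + m : ℕ) : ℝ)) by ring,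
        Polynomial.natDegree_neg, Polynomial.natDegree_X_sub_C]
    rw [hPdef, Polynomial.natDegree_comp, h1, mul_one, ascPochhammer_natDegree]
    omega
  have heval : ∀ r ∈ Finset.range (m + 1),
      P.eval (r : ℝ) = (((c + m - r).ascFactorial (m-1) : ℕ) : ℝ) := by
    intro r hr
    have hrm : r ≤ m := by have := Finset.mem_range.1 hr; omega
    rw [hPdef, Polynomial.eval_comp]
    have h2 : Polynomial.eval (r : ℝ) (C ((c + m : ℕ) : ℝ) - X) = ((c + m - r : ℕ) : ℝ) := by
      rw [Polynomial.eval_sub, Polynomial.eval_C, Polynomial.eval_X]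
      have : (((c + m : ℕ) : ℝ)) = ((c + m - r : ℕ) : ℝ) + (r : ℝ) := by
        push_cast [Nat.cast_sub (show r ≤ c + m by omega)]
        ring
      rw [this]; ring
    rw [h2, ← ascPochhammer_eval_cast, ascPochhammer_nat_eq_ascFactorial]
  have halt := alt_sum_poly m P hdeg
  rw [← halt]
  refine Finset.sum_congr rfl fun r hr => ?_
  rw [heval r hr]
  push_cast
  ring

lemma sig_sum (hd : 2 ≤ d) (N : ℕ) (k l : ℕ) (hkl : (k, l) ≠ (0, 0)) :
    ∑ r ∈ Finset.range (min k l + 1),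
      coeff d k l r * ((sig d N (k - r) (l - r) : ℝ) : ℂ) = 0 := by
  by_cases hkl2 : k = l
  · subst hkl2
    have hk : 1 ≤ k := by
      rcases Nat.eq_zero_or_pos k with h | h
      · exact absurd (by rw [h]) hkl
      · exact h
    rw [min_self]
    have hterm : ∀ r ∈ Finset.range (k + 1),
        coeff d k k r * ((sig d N (k - r) (k - r) : ℝ) : ℂ)
        = ((N:ℂ)^2 * (((d-1).factorial : ℕ) : ℂ) / ((k.factorial : ℕ) : ℂ)) *
          ((-1:ℂ)^r * ((k.choose r * (d + k - r).ascFactorial (k-1) : ℕ) : ℂ)) := by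
      intro r hr
      have hrk : r ≤ k := by have := Finset.mem_range.1 hr; omega
      rw [coeff, sig, if_pos rfl]
      have hnat : (d + k + k - r - 2).factorial * k.factorial
          = (d-1).factorial * (k.choose r * (d + k - r).ascFactorial (k-1)) *
            (r.factorial * (k - r).factorial * (k - r).factorial) *
            ((d + (k - r) - 1).choose (k - r)) := by
        have h1 : ((d + (k - r) - 1).choose (k - r)) * ((k-r).factorial * (d-1).factorial)
            = (d + (k - r) - 1).factorial := choose_fact hd (k - r)
        have h2 : (d + k - r - 1).factorial * (d + k - r).ascFactorial (k-1)
            = (d + k + k - r - 2).factorial := by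
          have := Nat.factorial_mul_ascFactorial (d + k - r - 1) (k - 1)
          rw [show d + k - r - 1 + 1 = d + k - r by omega,
            show d + k - r - 1 + (k - 1) = d + k + k - r - 2 by omega] at this
          exact this
        have h3 : k.choose r * r.factorial * (k - r).factorial = k.factorial :=
          Nat.choose_mul_factorial_mul_factorial hrk
        have h4 : d + (k - r) - 1 = d + k - r - 1 := by omega
        calc (d + k + k - r - 2).factorial * k.factorial
            = ((d + k - r - 1).factorial * (d + k - r).ascFactorial (k-1)) *
              (k.choose r * r.factorial * (k - r).factorial) := by rw [h2, h3]
          _ = ((d + (k - r) - 1).choose (k - r) * ((k-r).factorial * (d-1).factorial) *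
                (d + k - r).ascFactorial (k-1)) *
              (k.choose r * r.factorial * (k - r).factorial) := by rw [h4] at h1; rw [h4, h1]
          _ = _ := by ring
      have hfr : ((r.factorial : ℕ) : ℂ) ≠ 0 := by
        exact_mod_cast (Nat.factorial_pos r).ne'
      have hfkr : (((k-r).factorial : ℕ) : ℂ) ≠ 0 := by
        exact_mod_cast (Nat.factorial_pos (k-r)).ne'
      have hfk : ((k.factorial : ℕ) : ℂ) ≠ 0 := by
        exact_mod_cast (Nat.factorial_pos k).ne'
      have hch : (((d + (k - r) - 1).choose (k - r) : ℕ) : ℂ) ≠ 0 := by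
        exact_mod_cast (Nat.choose_pos (show k - r ≤ d + (k - r) - 1 by omega)).ne'
      have hnatC : (((d + k + k - r - 2).factorial : ℕ) : ℂ) * ((k.factorial : ℕ) : ℂ)
          = (((d-1).factorial : ℕ) : ℂ) *
            ((k.choose r * (d + k - r).ascFactorial (k-1) : ℕ) : ℂ) *
            (((r.factorial : ℕ) : ℂ) * (((k-r).factorial : ℕ) : ℂ) * (((k-r).factorial : ℕ) : ℂ)) *
            (((d + (k - r) - 1).choose (k - r) : ℕ) : ℂ) := by
        exact_mod_cast congrArg (fun n : ℕ => (n : ℂ)) hnat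
      push_cast
      push_cast at hnatC
      field_simp
      ring_nf
      ring_nf at hnatC
      linear_combination ((N:ℂ)^2) * hnatC
    rw [Finset.sum_congr rfl hterm, ← Finset.mul_sum]
    have hzero : ∑ r ∈ Finset.range (k + 1),
        (-1:ℂ)^r * ((k.choose r * (d + k - r).ascFactorial (k-1) : ℕ) : ℂ) = 0 := by
      have := alt_asc k d hk
      have h2 : ((∑ r ∈ Finset.range (k + 1),
          (-1:ℝ)^r * ((k.choose r * (d + k - r).ascFactorial (k-1) : ℕ) : ℝ) : ℝ) : ℂ) = 0 := by
        rw [this]; norm_num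
      rw [← h2]
      push_cast
      ring
    rw [hzero, mul_zero]
  · refine Finset.sum_eq_zero fun r hr => ?_
    have hrm : r ≤ min k l := by have := Finset.mem_range.1 hr; omega
    have hne : k - r ≠ l - r := by
      intro h
      apply hkl2
      omega
    rw [sig, if_neg hne]
    norm_num

lemma Sr_zero (X : Finset (Fin d → ℂ)) : Sr X 0 0 = ((X.card : ℝ))^2 := by
  have h0 : S X 0 0 = (((X.card:ℝ)^2 : ℝ) : ℂ) := by
    rw [S]
    push_cast
    simp [sq]
  have h1 := S_eq_Sr X 0 0
  rw [h0] at h1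
  exact_mod_cast h1.symm

lemma sig_zero (N : ℕ) : sig d N 0 0 = (N:ℝ)^2 := by
  simp [sig]

end DesignAux

/-- `X` is a complex spherical `T`-design iff all the Jacobi polynomial
double sums vanish for `(k,l) ∈ T`, `(k,l) ≠ (0,0)`. -/
theorem stmt_1 {d : ℕ} (hd : 2 ≤ d) (X : Finset (Fin d → ℂ)) (hXne : X.Nonempty)
    (hXsphere : ∀ x ∈ X, cInner x x = 1)
    (T : Finset (ℕ × ℕ)) (hT : IsLowerSet' T) :
    IsDesign d X T ↔
      ∀ kl ∈ T, kl ≠ (0, 0) →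
        ∑ x ∈ X, ∑ y ∈ X, jacobi d kl.1 kl.2 (cInner x y) = 0 := by
  classical
  constructor
  · intro hdes kl hkl hne
    obtain ⟨k, l⟩ := kl
    rw [DesignAux.jacobi_sum X k l]
    have hS : ∀ r ∈ Finset.range (min k l + 1),
        DesignAux.S X (k - r) (l - r) =
          ((DesignAux.sig d X.card (k - r) (l - r) : ℝ) : ℂ) := by
      intro r hr
      rw [DesignAux.S_eq_Sr]
      norm_cast
      refine DesignAux.design_to_S hd X _ _ ?_
      intro a b ha hb
      exact hdes (k - r, l - r) (hT (k, l) hkl _ (Nat.sub_le _ _) (Nat.sub_le _ _)) a b ha hb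
    rw [Finset.sum_congr rfl fun r hr => by rw [hS r hr]]
    rw [DesignAux.sig_sum hd X.card k l hne, mul_zero]
  · intro hvan
    have main : ∀ n : ℕ, ∀ k l : ℕ, k + l ≤ n → (k, l) ∈ T →
        DesignAux.Sr X k l = DesignAux.sig d X.card k l := by
      intro n
      induction n with
      | zero =>
        intro k l hn _
        have hk : k = 0 := by omega
        have hl : l = 0 := by omega
        subst hk; subst hl
        rw [DesignAux.Sr_zero, DesignAux.sig_zero]
      | succ n ihn =>
        intro k l hn hmem
        by_cases h00 : (k, l) = (0, 0)
        · have hk0 : k = 0 ∧ l = 0 := by simpa [Prod.ext_iff] using h00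
          obtain ⟨hk, hl⟩ := hk0
          subst hk; subst hl
          rw [DesignAux.Sr_zero, DesignAux.sig_zero]
        · have hvanish := hvan (k, l) hmem h00
          rw [DesignAux.jacobi_sum X k l] at hvanish
          have hpre : (((d + k + l - 1 : ℕ) : ℂ) / ((Nat.factorial (d - 1)) : ℂ)) ≠ 0 := by
            apply div_ne_zero
            · exact_mod_cast (show (0:ℕ) < d + k + l - 1 by omega).ne'
            · exact_mod_cast (Nat.factorial_pos (d-1)).ne'
          have hsum0 : ∑ r ∈ Finset.range (min k l + 1),
              DesignAux.coeff d k l r * DesignAux.S X (k - r) (l - r) = 0 :=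
            (mul_eq_zero.1 hvanish).resolve_left hpre
          have hdiff : ∑ r ∈ Finset.range (min k l + 1),
              DesignAux.coeff d k l r * (DesignAux.S X (k - r) (l - r) -
                ((DesignAux.sig d X.card (k - r) (l - r) : ℝ) : ℂ)) = 0 := by
            have hsig := DesignAux.sig_sum hd X.card k l h00
            simp only [mul_sub]
            rw [Finset.sum_sub_distrib, hsum0, hsig, sub_zero]
          rw [Finset.sum_range_succ' _ (min k l)] at hdiff
          have hIH : ∀ i ∈ Finset.range (min k l),
              DesignAux.coeff d k l (i+1) * (DesignAux.S X (k - (i+1)) (l - (i+1)) -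
                ((DesignAux.sig d X.card (k - (i+1)) (l - (i+1)) : ℝ) : ℂ)) = 0 := by
            intro i hi
            have him : i + 1 ≤ min k l := by have := Finset.mem_range.1 hi; omega
            have hmem' : (k - (i+1), l - (i+1)) ∈ T :=
              hT (k, l) hmem _ (Nat.sub_le _ _) (Nat.sub_le _ _)
            have hle : (k - (i+1)) + (l - (i+1)) ≤ n := by omega
            rw [DesignAux.S_eq_Sr, ihn _ _ hle hmem', sub_self, mul_zero]
          rw [Finset.sum_eq_zero hIH, zero_add] at hdiff
          have hc0 : DesignAux.coeff d k l 0 ≠ 0 := by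
            rw [DesignAux.coeff]
            apply div_ne_zero
            · rw [pow_zero, one_mul]
              exact_mod_cast (Nat.factorial_pos _).ne'
            · refine mul_ne_zero (mul_ne_zero ?_ ?_) ?_ <;>
                exact_mod_cast (Nat.factorial_pos _).ne'
          have hS0 := sub_eq_zero.1 ((mul_eq_zero.1 hdiff).resolve_left hc0)
          rw [Nat.sub_zero, Nat.sub_zero] at hS0
          rw [DesignAux.S_eq_Sr] at hS0
          exact_mod_cast hS0
    intro kl hmem a b ha hb
    exact DesignAux.S_to_design hd X hXsphere kl.1 kl.2
      (main (kl.1 + kl.2) kl.1 kl.2 le_rfl (by simpa using hmem)) a b ha hb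
end

section
/- Let d ≥ 1 and let X be a finite nonempty subset of Ω(d). (a) For every (k,l) ∈ ℕ×ℕ, the sum S_{k,l} := Σ_{x,y∈X} (x^*y)^k·(y^*x)^l is a nonnegative real number, and if k = l then S_{k,k} ≥ |X|²/C(d+k−1,k). (b) If 𝒯 is a lower set, then S_{k,l} = δ_{k,l}·|X|²/C(d+k−1,k) for every (k,l) ∈ 𝒯 if and only if X is a complex spherical 𝒯-design. -/
open Finset

open scoped Classical

noncomputable def Mmt {d : ℕ} (X : Finset (Fin d → ℂ)) (a b : Fin d → ℕ) : ℂ :=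
  ∑ z ∈ X, (∏ i, (z i) ^ (a i)) * ∏ i, ((starRingEnd ℂ) (z i)) ^ (b i)

noncomputable def MmtR {d : ℕ} (X : Finset (Fin d → ℂ)) (a : Fin d → ℕ) : ℝ :=
  ∑ z ∈ X, ∏ i, (Complex.normSq (z i)) ^ (a i)

lemma Mmt_conj {d : ℕ} (X : Finset (Fin d → ℂ)) (a b : Fin d → ℕ) :
    Mmt X b a = (starRingEnd ℂ) (Mmt X a b) := by
  simp only [Mmt, map_sum, map_mul, map_prod, map_pow, Complex.conj_conj]
  exact Finset.sum_congr rfl fun z _ => mul_comm _ _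

lemma Mmt_diag {d : ℕ} (X : Finset (Fin d → ℂ)) (a : Fin d → ℕ) :
    Mmt X a a = ((MmtR X a : ℝ) : ℂ) := by
  simp only [Mmt, MmtR, Complex.ofReal_sum, Complex.ofReal_prod, Complex.ofReal_pow]
  refine Finset.sum_congr rfl fun z _ => ?_
  rw [← Finset.prod_mul_distrib]
  exact Finset.prod_congr rfl fun i _ => by rw [← mul_pow, Complex.mul_conj]

lemma key_expand {d : ℕ} (X : Finset (Fin d → ℂ)) (k l : ℕ) :
    (∑ x ∈ X, ∑ y ∈ X, (cInner x y) ^ k * (cInner y x) ^ l)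
    = ∑ a ∈ piAntidiag (univ : Finset (Fin d)) k,
        ∑ b ∈ piAntidiag (univ : Finset (Fin d)) l,
        (Nat.multinomial univ a : ℂ) * (Nat.multinomial univ b : ℂ) *
          ((Complex.normSq (Mmt X a b) : ℝ) : ℂ) := by
  set A := piAntidiag (univ : Finset (Fin d)) k with hA
  set B := piAntidiag (univ : Finset (Fin d)) l with hB
  have h : ∀ x y : Fin d → ℂ, (cInner x y) ^ k * (cInner y x) ^ l =
      ∑ a ∈ A, ∑ b ∈ B,
          (Nat.multinomial univ a : ℂ) * (Nat.multinomial univ b : ℂ) *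
            (((∏ i, (x i) ^ (b i)) * ∏ i, (starRingEnd ℂ) (x i) ^ (a i)) *
             ((∏ i, (y i) ^ (a i)) * ∏ i, (starRingEnd ℂ) (y i) ^ (b i))) := by
    intro x y
    rw [show cInner x y = ∑ i, (starRingEnd ℂ) (x i) * y i from rfl,
        show cInner y x = ∑ i, (starRingEnd ℂ) (y i) * x i from rfl,
        Finset.sum_pow_eq_sum_piAntidiag, Finset.sum_pow_eq_sum_piAntidiag,
        Finset.sum_mul_sum]
    refine Finset.sum_congr rfl fun a _ => Finset.sum_congr rfl fun b _ => ?_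
    simp only [mul_pow, Finset.prod_mul_distrib]
    ring
  simp_rw [h]
  have swap : ∀ F : (Fin d → ℂ) → (Fin d → ℂ) → (Fin d → ℕ) → (Fin d → ℕ) → ℂ,
      (∑ x ∈ X, ∑ y ∈ X, ∑ a ∈ A, ∑ b ∈ B, F x y a b)
      = ∑ a ∈ A, ∑ b ∈ B, ∑ x ∈ X, ∑ y ∈ X, F x y a b := by
    intro F
    calc (∑ x ∈ X, ∑ y ∈ X, ∑ a ∈ A, ∑ b ∈ B, F x y a b)
        = ∑ x ∈ X, ∑ a ∈ A, ∑ y ∈ X, ∑ b ∈ B, F x y a b :=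
          Finset.sum_congr rfl fun x _ => Finset.sum_comm
      _ = ∑ a ∈ A, ∑ x ∈ X, ∑ y ∈ X, ∑ b ∈ B, F x y a b := Finset.sum_comm
      _ = ∑ a ∈ A, ∑ x ∈ X, ∑ b ∈ B, ∑ y ∈ X, F x y a b :=
          Finset.sum_congr rfl fun a _ => Finset.sum_congr rfl fun x _ => Finset.sum_comm
      _ = ∑ a ∈ A, ∑ b ∈ B, ∑ x ∈ X, ∑ y ∈ X, F x y a b :=
          Finset.sum_congr rfl fun a _ => Finset.sum_comm
  rw [swap]
  refine Finset.sum_congr rfl fun a _ => Finset.sum_congr rfl fun b _ => ?_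
  have pull : ∀ (c : ℂ) (P Q : (Fin d → ℂ) → ℂ),
      (∑ x ∈ X, ∑ y ∈ X, c * (P x * Q y)) = c * ((∑ x ∈ X, P x) * (∑ y ∈ X, Q y)) := by
    intro c P Q
    rw [Finset.sum_mul_sum]
    simp [Finset.mul_sum]
  rw [pull]
  have h1 : (∑ x ∈ X, (∏ i, (x i) ^ (b i)) * ∏ i, (starRingEnd ℂ) (x i) ^ (a i)) = Mmt X b a := rfl
  have h2 : (∑ y ∈ X, (∏ i, (y i) ^ (a i)) * ∏ i, (starRingEnd ℂ) (y i) ^ (b i)) = Mmt X a b := rfl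
  rw [h1, h2, Mmt_conj]
  congr 1
  rw [mul_comm, Complex.mul_conj]

/-- the double sum as a real number -/
noncomputable def Sreal {d : ℕ} (X : Finset (Fin d → ℂ)) (k l : ℕ) : ℝ :=
  ∑ a ∈ piAntidiag (univ : Finset (Fin d)) k, ∑ b ∈ piAntidiag (univ : Finset (Fin d)) l,
    (Nat.multinomial univ a : ℝ) * (Nat.multinomial univ b : ℝ) * Complex.normSq (Mmt X a b)

lemma S_eq {d : ℕ} (X : Finset (Fin d → ℂ)) (k l : ℕ) :
    (∑ x ∈ X, ∑ y ∈ X, (cInner x y) ^ k * (cInner y x) ^ l) = ((Sreal X k l : ℝ) : ℂ) := by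
  rw [key_expand, Sreal]
  push_cast
  rfl

lemma trace_id {d : ℕ} (X : Finset (Fin d → ℂ)) (hX : ∀ x ∈ X, cInner x x = 1) (k : ℕ) :
    (∑ a ∈ piAntidiag (univ : Finset (Fin d)) k, (Nat.multinomial univ a : ℝ) * MmtR X a)
      = X.card := by
  have hz : ∀ z ∈ X, (∑ i, Complex.normSq (z i)) = 1 := by
    intro z hz
    have h := hX z hz
    have h2 : cInner z z = ((∑ i, Complex.normSq (z i) : ℝ) : ℂ) := by
      simp only [cInner, Complex.ofReal_sum]
      exact Finset.sum_congr rfl fun i _ => by rw [mul_comm, Complex.mul_conj]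
    rw [h2] at h
    exact_mod_cast h
  calc ∑ a ∈ piAntidiag (univ : Finset (Fin d)) k, (Nat.multinomial univ a : ℝ) * MmtR X a
      = ∑ a ∈ piAntidiag (univ : Finset (Fin d)) k, ∑ z ∈ X,
          (Nat.multinomial univ a : ℝ) * ∏ i, (Complex.normSq (z i)) ^ (a i) := by
        simp [MmtR, Finset.mul_sum]
    _ = ∑ z ∈ X, ∑ a ∈ piAntidiag (univ : Finset (Fin d)) k,
          (Nat.multinomial univ a : ℝ) * ∏ i, (Complex.normSq (z i)) ^ (a i) := Finset.sum_comm
    _ = ∑ z ∈ X, (∑ i, Complex.normSq (z i)) ^ k := by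
        refine Finset.sum_congr rfl fun z _ => ?_
        rw [Finset.sum_pow_eq_sum_piAntidiag]
    _ = ∑ z ∈ X, 1 := Finset.sum_congr rfl fun z hzz => by rw [hz z hzz, one_pow]
    _ = X.card := by simp

lemma card_A {d k : ℕ} : (piAntidiag (univ : Finset (Fin d)) k).card = (d + k - 1).choose k := by
  rw [← Finset.map_sym_eq_piAntidiag, Finset.card_map, Finset.sym_univ, Finset.card_univ,
    Sym.card_sym_eq_choose, Fintype.card_fin]

lemma arith {d k : ℕ} (hd : 1 ≤ d) (a : Fin d → ℕ) (ha : ∑ i, a i = k) :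
    Nat.multinomial (univ : Finset (Fin d)) a *
      (Nat.factorial (d - 1) * ∏ i, Nat.factorial (a i)) * (d + k - 1).choose k
      = Nat.factorial (d + k - 1) := by
  have h1 : (∏ i, Nat.factorial (a i)) * Nat.multinomial (univ : Finset (Fin d)) a
      = Nat.factorial k := by
    have := Nat.multinomial_spec (univ : Finset (Fin d)) a
    rwa [ha] at this
  have h2 : (d + k - 1).choose k * Nat.factorial k * Nat.factorial (d - 1)
      = Nat.factorial (d + k - 1) := by
    have hk : k ≤ d + k - 1 := by omega
    have := Nat.choose_mul_factorial_mul_factorial hk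
    rwa [show d + k - 1 - k = d - 1 by omega] at this
  calc Nat.multinomial (univ : Finset (Fin d)) a *
      (Nat.factorial (d - 1) * ∏ i, Nat.factorial (a i)) * (d + k - 1).choose k
      = (d + k - 1).choose k * ((∏ i, Nat.factorial (a i)) * Nat.multinomial univ a)
          * Nat.factorial (d - 1) := by ring
    _ = Nat.factorial (d + k - 1) := by rw [h1, h2]

lemma arithR {d k : ℕ} (hd : 1 ≤ d) (a : Fin d → ℕ) (ha : ∑ i, a i = k) :
    (Nat.multinomial (univ : Finset (Fin d)) a : ℝ) *
      ((Nat.factorial (d - 1) : ℝ) * ∏ i, (Nat.factorial (a i) : ℝ)) * ((d + k - 1).choose k : ℝ)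
      = (Nat.factorial (d + k - 1) : ℝ) := by
  exact_mod_cast congrArg (Nat.cast : ℕ → ℝ) (arith hd a ha)

lemma decomp {d : ℕ} (hd : 1 ≤ d) (X : Finset (Fin d → ℂ))
    (hX : ∀ x ∈ X, cInner x x = 1) (k : ℕ) :
    Sreal X k k
    = (X.card : ℝ)^2 / ((d + k - 1).choose k)
      + ((∑ a ∈ piAntidiag (univ : Finset (Fin d)) k, ∑ b ∈ piAntidiag (univ : Finset (Fin d)) k,
          if a = b then 0 else
            (Nat.multinomial univ a : ℝ) * (Nat.multinomial univ b : ℝ) * Complex.normSq (Mmt X a b))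
      + ∑ a ∈ piAntidiag (univ : Finset (Fin d)) k,
          ((Nat.multinomial univ a : ℝ) * MmtR X a - (X.card : ℝ) / ((d + k - 1).choose k))^2) := by
  rw [Sreal]
  set A := piAntidiag (univ : Finset (Fin d)) k with hAdef
  set N : ℝ := ((d + k - 1).choose k : ℝ) with hNdef
  set t : (Fin d → ℕ) → (Fin d → ℕ) → ℝ := fun a b =>
    (Nat.multinomial univ a : ℝ) * (Nat.multinomial univ b : ℝ) * Complex.normSq (Mmt X a b)
    with htdef
  have hNpos : 0 < N := by
    rw [hNdef]
    exact_mod_cast Nat.choose_pos (by omega)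
  have hcardA : (A.card : ℝ) = N := by rw [hAdef, card_A]
  have hsplit : (∑ a ∈ A, ∑ b ∈ A, t a b)
      = (∑ a ∈ A, t a a) + ∑ a ∈ A, ∑ b ∈ A, (if a = b then 0 else t a b) := by
    rw [← Finset.sum_add_distrib]
    refine Finset.sum_congr rfl fun a ha => ?_
    have e1 : ∑ b ∈ A, t a b
        = ∑ b ∈ A, ((if a = b then t a b else 0) + (if a = b then 0 else t a b)) :=
      Finset.sum_congr rfl fun b _ => by by_cases h : a = b <;> simp [h]
    rw [e1, Finset.sum_add_distrib, Finset.sum_ite_eq A a (fun b => t a b), if_pos ha]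
  have hdiagterm : ∀ a, t a a = ((Nat.multinomial univ a : ℝ) * MmtR X a)^2 := by
    intro a
    rw [htdef]
    simp only
    rw [Mmt_diag, Complex.normSq_ofReal]
    ring
  have hdiag : ∑ a ∈ A, t a a
      = (X.card : ℝ)^2/N + ∑ a ∈ A, ((Nat.multinomial univ a : ℝ) * MmtR X a - X.card/N)^2 := by
    simp_rw [hdiagterm]
    have h1 : ∑ a ∈ A, ((Nat.multinomial univ a : ℝ) * MmtR X a - X.card/N)^2
        = (∑ a ∈ A, ((Nat.multinomial univ a : ℝ) * MmtR X a)^2)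
          - 2*(X.card/N)*(∑ a ∈ A, (Nat.multinomial univ a : ℝ) * MmtR X a)
          + A.card * (X.card/N)^2 := by
      simp_rw [sub_sq]
      rw [Finset.sum_add_distrib, Finset.sum_sub_distrib, Finset.sum_const, nsmul_eq_mul,
        ← Finset.sum_mul, ← Finset.mul_sum]
      ring
    rw [h1, trace_id X hX k, hcardA]
    field_simp
    ring
  rw [hsplit, hdiag]
  ring

/-- (a) the moment sums `S_{k,l} = ∑_{x,y∈X} (x^*y)^k (y^*x)^l` are
nonnegative reals, with `S_{k,k} ≥ |X|²/C(d+k-1,k)`; (b) for a lower set `T`,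
equality for all `(k,l) ∈ T` holds iff `X` is a `T`-design. -/
theorem stmt_2 {d : ℕ} (hd : 1 ≤ d) (X : Finset (Fin d → ℂ)) (hXne : X.Nonempty)
    (hXsphere : ∀ x ∈ X, cInner x x = 1)
    (T : Finset (ℕ × ℕ)) (hT : IsLowerSet' T) :
    (∀ k l : ℕ,
      (∑ x ∈ X, ∑ y ∈ X, (cInner x y) ^ k * (cInner y x) ^ l).im = 0 ∧
      0 ≤ (∑ x ∈ X, ∑ y ∈ X, (cInner x y) ^ k * (cInner y x) ^ l).re ∧
      (k = l →
        (X.card : ℝ) ^ 2 / ((d + k - 1).choose k) ≤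
          (∑ x ∈ X, ∑ y ∈ X, (cInner x y) ^ k * (cInner y x) ^ l).re)) ∧
    ((∀ kl ∈ T,
        ∑ x ∈ X, ∑ y ∈ X, (cInner x y) ^ kl.1 * (cInner y x) ^ kl.2 =
          if kl.1 = kl.2 then (X.card : ℂ) ^ 2 / ((d + kl.1 - 1).choose kl.1) else 0) ↔
      IsDesign d X T) := by
  have tnn : ∀ (a b : Fin d → ℕ), (0:ℝ) ≤
      (Nat.multinomial (univ : Finset (Fin d)) a : ℝ) * (Nat.multinomial univ b : ℝ) *
        Complex.normSq (Mmt X a b) := fun a b =>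
    mul_nonneg (mul_nonneg (Nat.cast_nonneg _) (Nat.cast_nonneg _)) (Complex.normSq_nonneg _)
  have hSnn : ∀ k l, 0 ≤ Sreal X k l := fun k l =>
    Finset.sum_nonneg fun a _ => Finset.sum_nonneg fun b _ => tnn a b
  have hNpos : ∀ k : ℕ, (0:ℝ) < ((d + k - 1).choose k : ℝ) := fun k => by
    exact_mod_cast Nat.choose_pos (by omega)
  have hoffnn : ∀ k : ℕ, (0:ℝ) ≤
      ∑ a ∈ piAntidiag (univ : Finset (Fin d)) k, ∑ b ∈ piAntidiag (univ : Finset (Fin d)) k,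
        if a = b then 0 else
          (Nat.multinomial univ a : ℝ) * (Nat.multinomial univ b : ℝ) *
            Complex.normSq (Mmt X a b) := fun k =>
    Finset.sum_nonneg fun a _ => Finset.sum_nonneg fun b _ => by
      by_cases h : a = b
      · simp [h]
      · simpa [h] using tnn a b
  have hsqnn : ∀ k : ℕ, (0:ℝ) ≤
      ∑ a ∈ piAntidiag (univ : Finset (Fin d)) k,
        ((Nat.multinomial univ a : ℝ) * MmtR X a - (X.card : ℝ) / ((d + k - 1).choose k))^2 :=
    fun k => Finset.sum_nonneg fun a _ => sq_nonneg _
  constructor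
  · -- part (a)
    intro k l
    refine ⟨by rw [S_eq]; exact Complex.ofReal_im _, ?_, ?_⟩
    · rw [S_eq]; rw [Complex.ofReal_re]; exact hSnn k l
    · intro hkl
      subst hkl
      rw [S_eq, Complex.ofReal_re]
      have hdec := decomp hd X hXsphere k
      have := hoffnn k
      have := hsqnn k
      linarith
  · -- part (b)
    constructor
    · rintro hv ⟨k, l⟩ hkl a b hak hbl
      simp only at hak hbl ⊢
      have haA : a ∈ piAntidiag (univ : Finset (Fin d)) k :=
        Finset.mem_piAntidiag.2 ⟨hak, fun i _ => Finset.mem_univ i⟩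
      have hg := hv (k, l) hkl
      simp only at hg
      show Mmt X a b = (X.card : ℂ) * monomialAvg d a b
      have hCa : (0:ℝ) < (Nat.multinomial (univ : Finset (Fin d)) a : ℝ) := by
        exact_mod_cast Nat.multinomial_pos _ _
      have hCb : (0:ℝ) < (Nat.multinomial (univ : Finset (Fin d)) b : ℝ) := by
        exact_mod_cast Nat.multinomial_pos _ _
      by_cases hkl2 : k = l
      · subst hkl2
        have hbA : b ∈ piAntidiag (univ : Finset (Fin d)) k :=
          Finset.mem_piAntidiag.2 ⟨hbl, fun i _ => Finset.mem_univ i⟩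
        rw [if_pos rfl, S_eq] at hg
        have hSr : Sreal X k k = (X.card : ℝ)^2 / ((d + k - 1).choose k) := by
          have h2 : ((Sreal X k k : ℝ) : ℂ)
              = (((X.card : ℝ)^2 / ((d + k - 1).choose k) : ℝ) : ℂ) := by
            rw [hg]; push_cast; ring
          exact_mod_cast h2
        have hdec := decomp hd X hXsphere k
        have hoff := hoffnn k
        have hsq := hsqnn k
        have hoff0 : (∑ a' ∈ piAntidiag (univ : Finset (Fin d)) k,
            ∑ b' ∈ piAntidiag (univ : Finset (Fin d)) k,
            if a' = b' then 0 else
              (Nat.multinomial univ a' : ℝ) * (Nat.multinomial univ b' : ℝ) *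
                Complex.normSq (Mmt X a' b')) = 0 := by linarith
        have hsq0 : (∑ a' ∈ piAntidiag (univ : Finset (Fin d)) k,
            ((Nat.multinomial univ a' : ℝ) * MmtR X a' -
              (X.card : ℝ) / ((d + k - 1).choose k))^2) = 0 := by linarith
        by_cases hab : a = b
        · -- diagonal case
          subst hab
          have hterm := (Finset.sum_eq_zero_iff_of_nonneg
            (fun a' _ => sq_nonneg _)).1 hsq0 a haA
          have heq : (Nat.multinomial (univ : Finset (Fin d)) a : ℝ) * MmtR X a
              = (X.card : ℝ) / ((d + k - 1).choose k) := by
            have := pow_eq_zero_iff (n := 2) (by norm_num) |>.1 hterm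
            linarith [sub_eq_zero.1 this]
          -- arithmetic
          have harith := arithR hd a hak
          have hNne : (((d + k - 1).choose k : ℕ) : ℝ) ≠ 0 := ne_of_gt (hNpos k)
          have hfactpos : (0:ℝ) < ((d + k - 1).factorial : ℝ) := by
            exact_mod_cast Nat.factorial_pos _
          have hreal : MmtR X a = (X.card : ℝ) *
              (((d - 1).factorial : ℝ) * ∏ i, ((a i).factorial : ℝ)) /
                ((d + k - 1).factorial : ℝ) := by
            rw [eq_div_iff (ne_of_gt hfactpos), ← harith]
            have : MmtR X a = (X.card : ℝ) / ((d + k - 1).choose k) /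
                (Nat.multinomial (univ : Finset (Fin d)) a : ℝ) := by
              rw [← heq]; field_simp
            rw [this]
            field_simp
          rw [Mmt_diag, hreal]
          simp only [monomialAvg, if_pos rfl, hak]
          push_cast
          ring
        · -- off-diagonal
          have h1 := (Finset.sum_eq_zero_iff_of_nonneg
            (fun a' _ => Finset.sum_nonneg fun b' _ => by
              by_cases h : a' = b'
              · simp [h]
              · simpa [h] using tnn a' b')).1 hoff0 a haA
          have h2 := (Finset.sum_eq_zero_iff_of_nonneg (fun b' _ => by
              by_cases h : a = b'
              · simp [h]
              · simpa [h] using tnn a b')).1 h1 b hbA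
          rw [if_neg hab] at h2
          have hnsq : Complex.normSq (Mmt X a b) = 0 := by
            have := mul_pos hCa hCb
            rcases mul_eq_zero.1 h2 with h | h
            · exact absurd h (ne_of_gt this)
            · exact h
          rw [Complex.normSq_eq_zero.1 hnsq]
          simp [monomialAvg, hab]
      · -- k ≠ l
        rw [if_neg hkl2, S_eq] at hg
        have hSr : Sreal X k l = 0 := by exact_mod_cast hg
        have hbA : b ∈ piAntidiag (univ : Finset (Fin d)) l :=
          Finset.mem_piAntidiag.2 ⟨hbl, fun i _ => Finset.mem_univ i⟩
        have h1 := (Finset.sum_eq_zero_iff_of_nonneg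
          (fun a' _ => Finset.sum_nonneg fun b' _ => tnn a' b')).1 hSr a haA
        have h2 := (Finset.sum_eq_zero_iff_of_nonneg (fun b' _ => tnn a b')).1 h1 b hbA
        have hnsq : Complex.normSq (Mmt X a b) = 0 := by
          have := mul_pos hCa hCb
          rcases mul_eq_zero.1 h2 with h | h
          · exact absurd h (ne_of_gt this)
          · exact h
        have hab : a ≠ b := fun h => hkl2 (by rw [← hak, ← hbl, h])
        rw [Complex.normSq_eq_zero.1 hnsq]
        simp [monomialAvg, hab]
    · -- design → moment values
      rintro hdes ⟨k, l⟩ hkl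
      simp only
      have hdes' := hdes (k, l) hkl
      simp only at hdes'
      rw [S_eq]
      by_cases hkl2 : k = l
      · subst hkl2
        rw [if_pos rfl]
        have hval : ∀ a ∈ piAntidiag (univ : Finset (Fin d)) k,
            ∀ b ∈ piAntidiag (univ : Finset (Fin d)) k,
            Mmt X a b = (X.card : ℂ) * monomialAvg d a b := fun a ha b hb =>
          hdes' a b (Finset.mem_piAntidiag.1 ha).1 (Finset.mem_piAntidiag.1 hb).1
        have hSr : Sreal X k k = (X.card : ℝ)^2 / ((d + k - 1).choose k) := by
          rw [Sreal]
          have hterm : ∀ a ∈ piAntidiag (univ : Finset (Fin d)) k,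
              ∀ b ∈ piAntidiag (univ : Finset (Fin d)) k,
              (Nat.multinomial univ a : ℝ) * (Nat.multinomial univ b : ℝ) *
                Complex.normSq (Mmt X a b)
              = if a = b then (X.card : ℝ)^2 / ((d + k - 1).choose k)^2 else 0 := by
            intro a ha b hb
            have hak := (Finset.mem_piAntidiag.1 ha).1
            by_cases hab : a = b
            · subst hab
              rw [if_pos rfl, hval a ha a ha]
              have hμ : monomialAvg d a a = ((((d - 1).factorial : ℝ) *
                  ∏ i, ((a i).factorial : ℝ)) / ((d + k - 1).factorial : ℝ) : ℝ) := by
                simp only [monomialAvg, if_pos rfl, hak]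
                push_cast
                ring
              rw [hμ]
              rw [show (X.card : ℂ) * ((((((d - 1).factorial : ℝ) *
                  ∏ i, ((a i).factorial : ℝ)) / ((d + k - 1).factorial : ℝ)) : ℝ) : ℂ)
                = (((X.card : ℝ) * ((((d - 1).factorial : ℝ) *
                  ∏ i, ((a i).factorial : ℝ)) / ((d + k - 1).factorial : ℝ)) : ℝ) : ℂ) by
                push_cast; ring]
              rw [Complex.normSq_ofReal]
              have harith := arithR hd a hak
              have hfactne : ((d + k - 1).factorial : ℝ) ≠ 0 := by
                exact_mod_cast (Nat.factorial_pos _).ne'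
              have hNne : (((d + k - 1).choose k : ℕ) : ℝ) ≠ 0 := ne_of_gt (hNpos k)
              have hCane : (Nat.multinomial (univ : Finset (Fin d)) a : ℝ) ≠ 0 := by
                exact_mod_cast (Nat.multinomial_pos _ _).ne'
              have hFne : (((d - 1).factorial : ℝ) * ∏ i, ((a i).factorial : ℝ)) ≠ 0 := by
                apply mul_ne_zero
                · exact_mod_cast (Nat.factorial_pos _).ne'
                · apply Finset.prod_ne_zero_iff.2
                  intro i _
                  exact_mod_cast (Nat.factorial_pos _).ne'
              field_simp
              linear_combination ((1 : ℝ) *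
                ((Nat.multinomial (univ : Finset (Fin d)) a : ℝ) *
                  (((d - 1).factorial : ℝ) * ∏ i, ((a i).factorial : ℝ)) *
                    (((d + k - 1).choose k : ℕ) : ℝ) +
                  ((d + k - 1).factorial : ℝ))) * harith
            · rw [if_neg hab, hval a ha b hb]
              rw [show monomialAvg d a b = 0 by simp [monomialAvg, hab]]
              simp
          calc ∑ a ∈ piAntidiag (univ : Finset (Fin d)) k,
                ∑ b ∈ piAntidiag (univ : Finset (Fin d)) k,
                (Nat.multinomial univ a : ℝ) * (Nat.multinomial univ b : ℝ) *
                  Complex.normSq (Mmt X a b)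
              = ∑ a ∈ piAntidiag (univ : Finset (Fin d)) k,
                ∑ b ∈ piAntidiag (univ : Finset (Fin d)) k,
                (if a = b then (X.card : ℝ)^2 / ((d + k - 1).choose k)^2 else 0) :=
                Finset.sum_congr rfl fun a ha => Finset.sum_congr rfl fun b hb =>
                  hterm a ha b hb
            _ = ∑ a ∈ piAntidiag (univ : Finset (Fin d)) k,
                (X.card : ℝ)^2 / ((d + k - 1).choose k)^2 := by
                refine Finset.sum_congr rfl fun a ha => ?_
                rw [Finset.sum_ite_eq (piAntidiag (univ : Finset (Fin d)) k) a
                  (fun _ => (X.card : ℝ)^2 / ((d + k - 1).choose k)^2), if_pos ha]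
            _ = (X.card : ℝ)^2 / ((d + k - 1).choose k) := by
                rw [Finset.sum_const, card_A, nsmul_eq_mul]
                have hNne : (((d + k - 1).choose k : ℕ) : ℝ) ≠ 0 := ne_of_gt (hNpos k)
                field_simp
        rw [hSr]
        push_cast
        ring
      · rw [if_neg hkl2]
        have hSr : Sreal X k l = 0 := by
          rw [Sreal]
          refine Finset.sum_eq_zero fun a ha => Finset.sum_eq_zero fun b hb => ?_
          have hak := (Finset.mem_piAntidiag.1 ha).1
          have hbl := (Finset.mem_piAntidiag.1 hb).1
          have hab : a ≠ b := fun h => hkl2 (by rw [← hak, ← hbl, h])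
          rw [show Mmt X a b = (X.card : ℂ) * monomialAvg d a b from hdes' a b hak hbl,
            show monomialAvg d a b = 0 by simp [monomialAvg, hab]]
          simp
        rw [hSr]
        simp
end

section
/- Let L ⊆ Ω(d) be a finite set with |x^*y| < 1 for all distinct x,y ∈ L, let ω ∈ ℂ be a primitive n-th root of unity (n ≥ 2), and let X = ⋃_{i=0}^{n−1} ω^i L (the sets ω^i L are then pairwise disjoint). Suppose X is a complex spherical 𝒯-design for a lower set 𝒯, and let t = max{k : (k,k) ∈ 𝒯}. Then Σ_{x,y∈L} |x^*y|^{2t} = |L|²/C(d+t−1,t); that is, the projective points spanned by L form a complex projective t-design. -/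
open Finset

open scoped Classical

noncomputable def Pmon {d : ℕ} (a : Fin d → ℕ) (z : Fin d → ℂ) : ℂ := ∏ i, z i ^ a i

noncomputable def Mmat {d : ℕ} (X : Finset (Fin d → ℂ)) (a b : Fin d → ℕ) : ℂ :=
  ∑ z ∈ X, Pmon a z * (starRingEnd ℂ) (Pmon b z)

lemma cInner_smul' {d : ℕ} (c c' : ℂ) (x y : Fin d → ℂ) :
    cInner (c • x) (c' • y) = (starRingEnd ℂ) c * c' * cInner x y := by
  simp only [cInner, Pi.smul_apply, smul_eq_mul, map_mul, Finset.mul_sum]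
  exact Finset.sum_congr rfl fun i _ => by ring

lemma conj_cInner' {d : ℕ} (x y : Fin d → ℂ) :
    (starRingEnd ℂ) (cInner x y) = cInner y x := by
  simp only [cInner, map_sum, map_mul, Complex.conj_conj]
  exact Finset.sum_congr rfl fun i _ => mul_comm _ _

lemma cInner_pow_expand {d : ℕ} (w z : Fin d → ℂ) (t : ℕ) :
    (cInner w z) ^ t = ∑ a ∈ Finset.piAntidiag Finset.univ t,
      (Nat.multinomial Finset.univ a : ℂ) *
        ((starRingEnd ℂ) (Pmon a w) * Pmon a z) := by
  rw [cInner, Finset.sum_pow_eq_sum_piAntidiag]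
  refine Finset.sum_congr rfl fun a ha => ?_
  rw [Pmon, Pmon, map_prod]
  simp only [map_pow, mul_pow, Finset.prod_mul_distrib]

/-- if the `n`-antipodal cover `X = ⋃_{i<n} ω^i L` is a `T`-design
and `t = max{k : (k,k) ∈ T}`, then the lines spanned by `L` form a complex
projective `t`-design. -/
theorem stmt_3 {d n : ℕ} (hn : 2 ≤ n) (ω : ℂ) (hω : IsPrimitiveRoot ω n)
    (L : Finset (Fin d → ℂ)) (hLsphere : ∀ x ∈ L, cInner x x = 1)
    (hLa : ∀ x ∈ L, ∀ y ∈ L, x ≠ y → ‖cInner x y‖ < 1)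
    (T : Finset (ℕ × ℕ)) (hT : IsLowerSet' T)
    (hdesign : IsDesign d ((Finset.range n).biUnion fun i => L.image fun x => ω ^ i • x) T)
    (t : ℕ) (htT : (t, t) ∈ T) (htmax : ∀ k : ℕ, (k, k) ∈ T → k ≤ t) :
    ∑ x ∈ L, ∑ y ∈ L, ‖cInner x y‖ ^ (2 * t) =
      (L.card : ℝ) ^ 2 / ((d + t - 1).choose t) := by
  classical
  rcases L.eq_empty_or_nonempty with hL | ⟨x₀, hx₀⟩
  · simp [hL]
  have hd : 1 ≤ d := by
    by_contra h
    push_neg at h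
    interval_cases d
    have h1 := hLsphere x₀ hx₀
    simp [cInner] at h1
  have hn0 : n ≠ 0 := by omega
  have hω0 : ω ≠ 0 := hω.ne_zero hn0
  have hωabs : ‖ω‖ = 1 := Complex.norm_eq_one_of_pow_eq_one hω.pow_eq_one hn0
  have habs1 : ∀ k : ℕ, (starRingEnd ℂ) (ω ^ k) * ω ^ k = 1 := by
    intro k
    rw [mul_comm, Complex.mul_conj]
    have : Complex.normSq (ω ^ k) = 1 := by
      rw [← Complex.sq_norm, norm_pow, hωabs, one_pow, one_pow]
    rw [this, Complex.ofReal_one]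
  have hkey : ∀ i < n, ∀ j < n, ∀ x ∈ L, ∀ y ∈ L, ω ^ i • x = ω ^ j • y → i = j ∧ x = y := by
    intro i hi j hj x hx y hy hxy
    have e1 : ∀ (c : ℂ) (u v : Fin d → ℂ), cInner u (c • v) = c * cInner u v := by
      intro c u v
      have h := cInner_smul' 1 c u v
      simpa using h
    have h1 : cInner x (ω ^ i • x) = cInner x (ω ^ j • y) := by rw [hxy]
    rw [e1, e1, hLsphere x hx, mul_one] at h1
    have hxyeq : x = y := by
      by_contra hne
      have hlt := hLa x hx y hy hne
      have h2 : ‖ω ^ i‖ = ‖ω ^ j‖ * ‖cInner x y‖ := by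
        rw [h1, norm_mul]
      rw [norm_pow, norm_pow, hωabs, one_pow, one_pow, one_mul] at h2
      linarith
    subst hxyeq
    rw [hLsphere x hx, mul_one] at h1
    exact ⟨hω.pow_inj hi hj h1, rfl⟩
  set X := (Finset.range n).biUnion (fun i => L.image fun x => ω ^ i • x) with hX
  have hsum : ∀ g : (Fin d → ℂ) → ℂ,
      ∑ z ∈ X, g z = ∑ i ∈ Finset.range n, ∑ x ∈ L, g (ω ^ i • x) := by
    intro g
    rw [hX, Finset.sum_biUnion]
    · exact Finset.sum_congr rfl fun i hi => Finset.sum_image fun x hx y hy h =>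
        smul_right_injective _ (pow_ne_zero i hω0) h
    · intro i hi j hj hij
      simp only [Finset.coe_range, Set.mem_Iio] at hi hj
      simp only [Function.onFun]
      rw [Finset.disjoint_left]
      intro z hzi hzj
      simp only [Finset.mem_image] at hzi hzj
      obtain ⟨x, hx, rfl⟩ := hzi
      obtain ⟨y, hy, hyz⟩ := hzj
      exact hij ((hkey j hj i hi y hy x hx hyz).1).symm
  have hcardX : (X.card : ℂ) = (n : ℂ) * (L.card : ℂ) := by
    have h := hsum fun _ => (1 : ℂ)
    simpa [Finset.sum_const, nsmul_eq_mul] using h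
  have hXne : (X.card : ℂ) ≠ 0 := by
    rw [hcardX]
    have hLc : L.card ≠ 0 := Finset.card_ne_zero_of_mem hx₀
    simp [hn0, hLc]
  set A := Finset.piAntidiag (Finset.univ : Finset (Fin d)) t with hA
  set K : ℂ := ((Nat.factorial t : ℂ) * (Nat.factorial (d - 1) : ℂ)) /
      (Nat.factorial (d + t - 1) : ℂ) with hK
  have hfacne : (Nat.factorial (d + t - 1) : ℂ) ≠ 0 :=
    Nat.cast_ne_zero.mpr (Nat.factorial_ne_zero _)
  have hsumA : ∀ a ∈ A, ∑ i, a i = t := by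
    intro a ha
    rw [hA, Finset.mem_piAntidiag] at ha
    exact ha.1
  have hM : ∀ a ∈ A, ∀ b ∈ A, (Nat.multinomial Finset.univ a : ℂ) * Mmat X a b =
      if a = b then (X.card : ℂ) * K else 0 := by
    intro a ha b hb
    have hdes := hdesign (t, t) htT a b (hsumA a ha) (hsumA b hb)
    have hMab : Mmat X a b = (X.card : ℂ) * monomialAvg d a b := by
      rw [Mmat, ← hdes]
      refine Finset.sum_congr rfl fun z hz => ?_
      rw [Pmon, Pmon, map_prod]
      simp only [map_pow]
    rw [hMab, monomialAvg, hsumA a ha]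
    by_cases hab : a = b
    · simp only [hab, if_pos rfl, ↓reduceIte]
      have hmul : (∏ i, (Nat.factorial (b i) : ℂ)) * (Nat.multinomial Finset.univ b : ℂ)
          = (Nat.factorial t : ℂ) := by
        have hms := Nat.multinomial_spec (Finset.univ : Finset (Fin d)) b
        rw [hsumA b hb] at hms
        exact_mod_cast congrArg (fun m : ℕ => (m : ℂ)) hms
      rw [hK]
      field_simp
      rw [← hmul]
      ring
    · simp [hab]
  have hdiag1 : ∀ z ∈ X, cInner z z = 1 := by
    intro z hz
    rw [hX] at hz
    simp only [Finset.mem_biUnion, Finset.mem_image, Finset.mem_range] at hz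
    obtain ⟨i, hi, x, hx, rfl⟩ := hz
    rw [cInner_smul', hLsphere x hx, mul_one, habs1]
  have hNK : (A.card : ℂ) * K = 1 := by
    have e1 : ∑ z ∈ X, (cInner z z) ^ t = (X.card : ℂ) := by
      rw [Finset.sum_congr rfl fun z hz => by rw [hdiag1 z hz, one_pow]]
      simp
    have e2 : ∑ z ∈ X, (cInner z z) ^ t = (X.card : ℂ) * ((A.card : ℂ) * K) := by
      calc ∑ z ∈ X, (cInner z z) ^ t
          = ∑ z ∈ X, ∑ a ∈ A, (Nat.multinomial Finset.univ a : ℂ) *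
              ((starRingEnd ℂ) (Pmon a z) * Pmon a z) :=
            Finset.sum_congr rfl fun z _ => cInner_pow_expand z z t
        _ = ∑ a ∈ A, (Nat.multinomial Finset.univ a : ℂ) * Mmat X a a := by
            rw [Finset.sum_comm]
            refine Finset.sum_congr rfl fun a _ => ?_
            rw [Mmat, Finset.mul_sum]
            exact Finset.sum_congr rfl fun z _ => by ring
        _ = ∑ _a ∈ A, (X.card : ℂ) * K := by
            refine Finset.sum_congr rfl fun a ha => ?_
            rw [hM a ha a ha, if_pos rfl]
        _ = (X.card : ℂ) * ((A.card : ℂ) * K) := by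
            rw [Finset.sum_const, nsmul_eq_mul]; ring
    have e3 : (X.card : ℂ) * ((A.card : ℂ) * K) = (X.card : ℂ) * 1 := by
      rw [mul_one, ← e2, e1]
    exact mul_left_cancel₀ hXne e3
  have hbig : ∑ z ∈ X, ∑ w ∈ X, (cInner w z) ^ t * (cInner z w) ^ t
      = (X.card : ℂ) ^ 2 * K := by
    calc ∑ z ∈ X, ∑ w ∈ X, (cInner w z) ^ t * (cInner z w) ^ t
        = ∑ z ∈ X, ∑ w ∈ X, ∑ a ∈ A, ∑ b ∈ A,
            ((Nat.multinomial Finset.univ a : ℂ) * ((starRingEnd ℂ) (Pmon a w) * Pmon a z)) *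
            ((Nat.multinomial Finset.univ b : ℂ) * ((starRingEnd ℂ) (Pmon b z) * Pmon b w)) := by
          refine Finset.sum_congr rfl fun z _ => Finset.sum_congr rfl fun w _ => ?_
          rw [cInner_pow_expand w z t, cInner_pow_expand z w t, Finset.sum_mul_sum]
      _ = ∑ z ∈ X, ∑ a ∈ A, ∑ w ∈ X, ∑ b ∈ A,
            ((Nat.multinomial Finset.univ a : ℂ) * ((starRingEnd ℂ) (Pmon a w) * Pmon a z)) *
            ((Nat.multinomial Finset.univ b : ℂ) * ((starRingEnd ℂ) (Pmon b z) * Pmon b w)) :=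
          Finset.sum_congr rfl fun z _ => Finset.sum_comm
      _ = ∑ a ∈ A, ∑ z ∈ X, ∑ w ∈ X, ∑ b ∈ A,
            ((Nat.multinomial Finset.univ a : ℂ) * ((starRingEnd ℂ) (Pmon a w) * Pmon a z)) *
            ((Nat.multinomial Finset.univ b : ℂ) * ((starRingEnd ℂ) (Pmon b z) * Pmon b w)) :=
          Finset.sum_comm
      _ = ∑ a ∈ A, ∑ z ∈ X, ∑ b ∈ A, ∑ w ∈ X,
            ((Nat.multinomial Finset.univ a : ℂ) * ((starRingEnd ℂ) (Pmon a w) * Pmon a z)) *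
            ((Nat.multinomial Finset.univ b : ℂ) * ((starRingEnd ℂ) (Pmon b z) * Pmon b w)) :=
          Finset.sum_congr rfl fun a _ => Finset.sum_congr rfl fun z _ => Finset.sum_comm
      _ = ∑ a ∈ A, ∑ b ∈ A, ∑ z ∈ X, ∑ w ∈ X,
            ((Nat.multinomial Finset.univ a : ℂ) * ((starRingEnd ℂ) (Pmon a w) * Pmon a z)) *
            ((Nat.multinomial Finset.univ b : ℂ) * ((starRingEnd ℂ) (Pmon b z) * Pmon b w)) :=
          Finset.sum_congr rfl fun a _ => Finset.sum_comm
      _ = ∑ a ∈ A, ∑ b ∈ A,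
            ((Nat.multinomial Finset.univ a : ℂ) * Mmat X a b) *
            ((Nat.multinomial Finset.univ b : ℂ) * Mmat X b a) := by
          refine Finset.sum_congr rfl fun a _ => Finset.sum_congr rfl fun b _ => ?_
          symm
          calc ((Nat.multinomial Finset.univ a : ℂ) * Mmat X a b) *
                ((Nat.multinomial Finset.univ b : ℂ) * Mmat X b a)
              = (∑ z ∈ X, (Nat.multinomial Finset.univ a : ℂ) *
                  (Pmon a z * (starRingEnd ℂ) (Pmon b z))) *
                (∑ w ∈ X, (Nat.multinomial Finset.univ b : ℂ) *
                  (Pmon b w * (starRingEnd ℂ) (Pmon a w))) := by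
                rw [Mmat, Mmat, Finset.mul_sum, Finset.mul_sum]
            _ = ∑ z ∈ X, ∑ w ∈ X,
                ((Nat.multinomial Finset.univ a : ℂ) * (Pmon a z * (starRingEnd ℂ) (Pmon b z))) *
                ((Nat.multinomial Finset.univ b : ℂ) * (Pmon b w * (starRingEnd ℂ) (Pmon a w))) :=
                Finset.sum_mul_sum _ _ _ _
            _ = ∑ z ∈ X, ∑ w ∈ X,
                ((Nat.multinomial Finset.univ a : ℂ) * ((starRingEnd ℂ) (Pmon a w) * Pmon a z)) *
                ((Nat.multinomial Finset.univ b : ℂ) * ((starRingEnd ℂ) (Pmon b z) * Pmon b w)) :=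
                Finset.sum_congr rfl fun z _ => Finset.sum_congr rfl fun w _ => by ring
      _ = ∑ a ∈ A, ((Nat.multinomial Finset.univ a : ℂ) * Mmat X a a) *
            ((Nat.multinomial Finset.univ a : ℂ) * Mmat X a a) := by
          refine Finset.sum_congr rfl fun a ha => ?_
          refine Finset.sum_eq_single_of_mem a ha fun b hb hba => ?_
          rw [hM a ha b hb, if_neg (fun h => hba h.symm), zero_mul]
      _ = ∑ _a ∈ A, ((X.card : ℂ) * K) * ((X.card : ℂ) * K) := by
          refine Finset.sum_congr rfl fun a ha => ?_
          rw [hM a ha a ha, if_pos rfl]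
      _ = (A.card : ℂ) * (((X.card : ℂ) * K) * ((X.card : ℂ) * K)) := by
          rw [Finset.sum_const, nsmul_eq_mul]
      _ = (X.card : ℂ) ^ 2 * K * ((A.card : ℂ) * K) := by ring
      _ = (X.card : ℂ) ^ 2 * K := by rw [hNK, mul_one]
  have hS : ∑ z ∈ X, ∑ w ∈ X, (cInner w z) ^ t * (cInner z w) ^ t
      = (n : ℂ) ^ 2 * ∑ x ∈ L, ∑ y ∈ L, (cInner y x) ^ t * (cInner x y) ^ t := by
    rw [hsum fun z => ∑ w ∈ X, (cInner w z) ^ t * (cInner z w) ^ t]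
    calc ∑ i ∈ Finset.range n, ∑ x ∈ L, ∑ w ∈ X,
            (cInner w (ω ^ i • x)) ^ t * (cInner (ω ^ i • x) w) ^ t
        = ∑ i ∈ Finset.range n, ∑ x ∈ L, ∑ j ∈ Finset.range n, ∑ y ∈ L,
            (cInner (ω ^ j • y) (ω ^ i • x)) ^ t * (cInner (ω ^ i • x) (ω ^ j • y)) ^ t := by
          refine Finset.sum_congr rfl fun i _ => Finset.sum_congr rfl fun x _ => ?_
          rw [hsum fun w => (cInner w (ω ^ i • x)) ^ t * (cInner (ω ^ i • x) w) ^ t]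
      _ = ∑ i ∈ Finset.range n, ∑ x ∈ L, ∑ j ∈ Finset.range n, ∑ y ∈ L,
            (cInner y x) ^ t * (cInner x y) ^ t := by
          refine Finset.sum_congr rfl fun i _ => Finset.sum_congr rfl fun x _ =>
            Finset.sum_congr rfl fun j _ => Finset.sum_congr rfl fun y _ => ?_
          rw [cInner_smul', cInner_smul', ← mul_pow, ← mul_pow (cInner y x)]
          congr 1
          have h1 := habs1 i
          have h2 := habs1 j
          calc ((starRingEnd ℂ) (ω ^ j) * ω ^ i * cInner y x) *
                ((starRingEnd ℂ) (ω ^ i) * ω ^ j * cInner x y)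
              = ((starRingEnd ℂ) (ω ^ j) * ω ^ j) *
                (((starRingEnd ℂ) (ω ^ i) * ω ^ i) * (cInner y x * cInner x y)) := by ring
            _ = cInner y x * cInner x y := by rw [h1, h2, one_mul, one_mul]
      _ = (n : ℂ) ^ 2 * ∑ x ∈ L, ∑ y ∈ L, (cInner y x) ^ t * (cInner x y) ^ t := by
          simp only [Finset.sum_const, Finset.card_range, nsmul_eq_mul]
          rw [← Finset.mul_sum]
          ring
  have hnC : (n : ℂ) ≠ 0 := Nat.cast_ne_zero.mpr hn0
  have hL2 : ∑ x ∈ L, ∑ y ∈ L, (cInner y x) ^ t * (cInner x y) ^ t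
      = (L.card : ℂ) ^ 2 * K := by
    have h := hS.symm.trans hbig
    rw [hcardX] at h
    have h2 : (n : ℂ) ^ 2 * (∑ x ∈ L, ∑ y ∈ L, (cInner y x) ^ t * (cInner x y) ^ t)
        = (n : ℂ) ^ 2 * ((L.card : ℂ) ^ 2 * K) := by
      rw [h]; ring
    exact mul_left_cancel₀ (pow_ne_zero 2 hnC) h2
  have hCneC : (((d + t - 1).choose t : ℕ) : ℂ) ≠ 0 :=
    Nat.cast_ne_zero.mpr (Nat.choose_pos (by omega)).ne'
  have hC : (((d + t - 1).choose t : ℕ) : ℂ) * K = 1 := by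
    have h := Nat.choose_mul_factorial_mul_factorial (show t ≤ d + t - 1 by omega)
    have h2 : d + t - 1 - t = d - 1 := by omega
    rw [h2] at h
    have h3 : (((d + t - 1).choose t : ℕ) : ℂ) * (Nat.factorial t : ℂ) *
        (Nat.factorial (d - 1) : ℂ) = (Nat.factorial (d + t - 1) : ℂ) := by
      exact_mod_cast h
    rw [hK]
    field_simp
    linear_combination h3
  have hfinal : ((∑ x ∈ L, ∑ y ∈ L, ‖cInner x y‖ ^ (2 * t) : ℝ) : ℂ)
      = (((L.card : ℝ) ^ 2 / ((d + t - 1).choose t) : ℝ) : ℂ) := by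
    push_cast
    calc ∑ x ∈ L, ∑ y ∈ L, ((‖cInner x y‖ : ℂ)) ^ (2 * t)
        = ∑ x ∈ L, ∑ y ∈ L, (cInner y x) ^ t * (cInner x y) ^ t := by
          refine Finset.sum_congr rfl fun x _ => Finset.sum_congr rfl fun y _ => ?_
          rw [pow_mul]
          have hsq : ((‖cInner x y‖ : ℂ)) ^ 2
              = cInner x y * (starRingEnd ℂ) (cInner x y) := by
            rw [Complex.mul_conj, ← Complex.ofReal_pow]
            exact congrArg _ (Complex.sq_norm _)
          rw [hsq, conj_cInner', mul_pow, mul_comm]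
      _ = (L.card : ℂ) ^ 2 * K := hL2
      _ = (L.card : ℂ) ^ 2 / (((d + t - 1).choose t : ℕ) : ℂ) := by
          rw [eq_div_iff hCneC]
          linear_combination ((L.card : ℂ)) ^ 2 * hC
  exact Complex.ofReal_injective hfinal
end

section
/- Let L ⊆ Ω(d) be a finite set with |x^*y| < 1 for all distinct x,y ∈ L, let t ≥ 1, and suppose Σ_{x,y∈L} |x^*y|^{2t} = |L|²/C(d+t−1,t) (i.e., the projective points spanned by L form a complex projective t-design). Let n > 1 be coprime to every integer in {2,3,…,t}, let ω ∈ ℂ be a primitive n-th root of unity, and let X = ⋃_{i=0}^{n−1} ω^i L (the sets ω^i L are pairwise disjoint). Then X is a complex spherical 𝒯-design for 𝒯 = {(k,l) ∈ ℕ×ℕ : k ≤ t and l ≤ t}. -/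
open Finset

open scoped Classical

namespace Stmt4


variable {d : ℕ}

noncomputable def M (L : Finset (Fin d → ℂ)) (a b : Fin d → ℕ) : ℂ :=
  ∑ x ∈ L, (∏ i, (x i) ^ (a i)) * ∏ i, ((starRingEnd ℂ) (x i)) ^ (b i)

noncomputable def muC (d k : ℕ) (a : Fin d → ℕ) : ℂ :=
  ((Nat.factorial (d - 1) : ℂ) * ∏ i, (Nat.factorial (a i) : ℂ)) /
    (Nat.factorial (d + k - 1) : ℂ)

lemma conj_cInner (x y : Fin d → ℂ) : (starRingEnd ℂ) (cInner x y) = cInner y x := by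
  simp only [cInner, map_sum, map_mul, Complex.conj_conj]
  exact Finset.sum_congr rfl fun i _ => mul_comm _ _

lemma conj_M (L : Finset (Fin d → ℂ)) (a b : Fin d → ℕ) :
    (starRingEnd ℂ) (M L a b) = M L b a := by
  simp only [M, map_sum, map_mul, map_prod, map_pow, Complex.conj_conj]
  exact Finset.sum_congr rfl fun x _ => mul_comm _ _

lemma conj_muC (d k : ℕ) (a : Fin d → ℕ) : (starRingEnd ℂ) (muC d k a) = muC d k a := by
  simp [muC, map_div₀, map_mul, map_prod, map_natCast]

lemma expand_cInner_pow (t : ℕ) (x y : Fin d → ℂ) :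
    (cInner x y) ^ t = ∑ a ∈ piAntidiag (univ : Finset (Fin d)) t,
      (Nat.multinomial univ a : ℂ) *
        ((∏ i, ((starRingEnd ℂ) (x i)) ^ (a i)) * ∏ i, (y i) ^ (a i)) := by
  rw [cInner, Finset.sum_pow_eq_sum_piAntidiag]
  refine Finset.sum_congr rfl fun a _ => ?_
  rw [← Finset.prod_mul_distrib]
  simp_rw [mul_pow]

lemma sum_swap4 {α β : Type*} (s s' : Finset α) (L L' : Finset β) (F : α → α → β → β → ℂ) :
    ∑ a ∈ s, ∑ b ∈ s', ∑ x ∈ L, ∑ y ∈ L', F a b x y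
      = ∑ x ∈ L, ∑ y ∈ L', ∑ a ∈ s, ∑ b ∈ s', F a b x y := by
  calc ∑ a ∈ s, ∑ b ∈ s', ∑ x ∈ L, ∑ y ∈ L', F a b x y
      = ∑ a ∈ s, ∑ x ∈ L, ∑ b ∈ s', ∑ y ∈ L', F a b x y :=
        Finset.sum_congr rfl fun a _ => Finset.sum_comm
    _ = ∑ x ∈ L, ∑ a ∈ s, ∑ b ∈ s', ∑ y ∈ L', F a b x y := Finset.sum_comm
    _ = ∑ x ∈ L, ∑ a ∈ s, ∑ y ∈ L', ∑ b ∈ s', F a b x y :=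
        Finset.sum_congr rfl fun x _ => Finset.sum_congr rfl fun a _ => Finset.sum_comm
    _ = ∑ x ∈ L, ∑ y ∈ L', ∑ a ∈ s, ∑ b ∈ s', F a b x y :=
        Finset.sum_congr rfl fun x _ => Finset.sum_comm

lemma card_piAntidiag_univ (d t : ℕ) :
    (piAntidiag (univ : Finset (Fin d)) t).card = (d + t - 1).choose t := by
  rw [← Finset.map_sym_eq_piAntidiag, Finset.card_map, Finset.sym_univ, Finset.card_univ,
    Sym.card_sym_eq_choose, Fintype.card_fin]

lemma multinomial_mul_muC {d : ℕ} (hd : 1 ≤ d) (t : ℕ) (a : Fin d → ℕ)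
    (ha : ∑ i, a i = t) :
    (Nat.multinomial (univ : Finset (Fin d)) a : ℂ) * muC d t a
      = 1 / ((d + t - 1).choose t : ℂ) := by
  have hspec : (∏ i, Nat.factorial (a i)) * Nat.multinomial (univ : Finset (Fin d)) a
      = Nat.factorial t := by
    rw [Nat.multinomial_spec, ha]
  have hch : (d + t - 1).choose t * (Nat.factorial t * Nat.factorial (d - 1))
      = Nat.factorial (d + t - 1) := by
    have h1 : t ≤ d + t - 1 := by omega
    have h2 : d + t - 1 - t = d - 1 := by omega
    have := Nat.choose_mul_factorial_mul_factorial h1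
    rw [h2] at this
    rw [← this]; ring
  have hfac : (Nat.factorial (d + t - 1) : ℂ) ≠ 0 := by
    exact_mod_cast Nat.cast_ne_zero.mpr (Nat.factorial_ne_zero _)
  have hchoose : ((d + t - 1).choose t : ℂ) ≠ 0 := by
    exact_mod_cast Nat.cast_ne_zero.mpr (Nat.choose_pos (by omega)).ne'
  rw [muC]
  field_simp
  push_cast [← hspec, ← hch]
  push_cast
  ring

/-- degree-`k` design property for the set `L`. -/
def Des (L : Finset (Fin d → ℂ)) (k : ℕ) : Prop :=
  ∀ a b : Fin d → ℕ, (∑ i, a i) = k → (∑ i, b i) = k →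
    M L a b = if a = b then (L.card : ℂ) * muC d k a else 0

theorem level_t {d : ℕ} (hd : 1 ≤ d) (t : ℕ) (L : Finset (Fin d → ℂ))
    (hs : ∀ x ∈ L, cInner x x = 1)
    (hP : ∑ x ∈ L, ∑ y ∈ L, (cInner x y) ^ t * (cInner y x) ^ t
      = (L.card : ℂ) ^ 2 / ((d + t - 1).choose t : ℂ)) : Des L t := by
  set s : Finset (Fin d → ℕ) := piAntidiag (univ : Finset (Fin d)) t with hsdef
  set C : ℂ := ((d + t - 1).choose t : ℂ) with hC
  have hCne : C ≠ 0 := by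
    rw [hC]
    exact_mod_cast Nat.cast_ne_zero.mpr (Nat.choose_pos (by omega)).ne'
  set c : (Fin d → ℕ) → ℂ := fun a => (Nat.multinomial (univ : Finset (Fin d)) a : ℂ) with hc
  have hmem : ∀ a ∈ s, ∑ i, a i = t := by
    intro a ha
    simpa [hsdef] using (Finset.mem_piAntidiag.mp ha).1
  have hcmu : ∀ a ∈ s, c a * muC d t a = 1 / C :=
    fun a ha => multinomial_mul_muC hd t a (hmem a ha)
  -- Step A : double moment sum
  have hPP : ∑ a ∈ s, ∑ b ∈ s, (c a * c b) * (M L a b * M L b a)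
      = (L.card : ℂ) ^ 2 / C := by
    rw [← hP]
    have lhs_eq : ∀ a ∈ s, ∀ b ∈ s, (c a * c b) * (M L a b * M L b a)
        = ∑ x ∈ L, ∑ y ∈ L, (c a * c b) *
            (((∏ i, ((starRingEnd ℂ) (x i)) ^ (a i)) * ∏ i, (x i) ^ (b i)) *
             ((∏ i, (y i) ^ (a i)) * ∏ i, ((starRingEnd ℂ) (y i)) ^ (b i))) := by
      intro a _ b _
      rw [mul_comm (M L a b), M, M, Finset.sum_mul_sum, Finset.mul_sum]
      refine Finset.sum_congr rfl fun x _ => ?_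
      rw [Finset.mul_sum]
      refine Finset.sum_congr rfl fun y _ => ?_
      ring
    rw [Finset.sum_congr rfl (fun a ha => Finset.sum_congr rfl (fun b hb => lhs_eq a ha b hb)),
      sum_swap4]
    refine Finset.sum_congr rfl fun x _ => Finset.sum_congr rfl fun y _ => ?_
    rw [expand_cInner_pow t x y, expand_cInner_pow t y x, Finset.sum_mul_sum]
    refine Finset.sum_congr rfl fun a _ => Finset.sum_congr rfl fun b _ => ?_
    ring
  -- Step B : linear moment sum
  have h1 : ∑ a ∈ s, c a * M L a a = (L.card : ℂ) := by
    have : ∑ x ∈ L, (cInner x x) ^ t = (L.card : ℂ) := by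
      rw [Finset.sum_congr rfl fun x hx => by rw [hs x hx, one_pow]]
      simp
    rw [← this, Finset.sum_congr rfl (fun x _ => expand_cInner_pow t x x), Finset.sum_comm]
    refine Finset.sum_congr rfl fun a _ => ?_
    rw [M, Finset.mul_sum]
    refine Finset.sum_congr rfl fun x _ => ?_
    ring
  -- The target matrix
  set T : (Fin d → ℕ) → (Fin d → ℕ) → ℂ :=
    fun a b => if a = b then (L.card : ℂ) * muC d t a else 0 with hT
  -- Step D : vanishing sum of squares
  have hDC : ∑ a ∈ s, ∑ b ∈ s, (c a * c b) *
      ((M L a b - T a b) * (starRingEnd ℂ) (M L a b - T a b)) = 0 := by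
    have hconjT : ∀ a b, (starRingEnd ℂ) (T a b) = T a b := by
      intro a b
      by_cases h : a = b <;> simp [hT, h, conj_muC, map_mul, map_natCast]
    have expand_term : ∀ a b, (c a * c b) *
        ((M L a b - T a b) * (starRingEnd ℂ) (M L a b - T a b))
        = (c a * c b) * (M L a b * M L b a)
          - (c a * c b) * (M L b a * T a b)
          - (c a * c b) * (M L a b * T a b)
          + (c a * c b) * (T a b * T a b) := by
      intro a b
      rw [map_sub, conj_M, hconjT]
      ring
    simp only [expand_term]
    rw [Finset.sum_congr rfl (fun a _ => by
      rw [Finset.sum_add_distrib, Finset.sum_sub_distrib, Finset.sum_sub_distrib])]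
    rw [Finset.sum_add_distrib, Finset.sum_sub_distrib, Finset.sum_sub_distrib, hPP]
    -- diagonal sums
    have diag : ∀ (G : (Fin d → ℕ) → (Fin d → ℕ) → ℂ),
        (∀ a b, a ≠ b → G a b = 0) →
        ∀ a ∈ s, ∑ b ∈ s, G a b = G a a := by
      intro G hG a ha
      rw [Finset.sum_eq_single_of_mem a ha (fun b _ hb => hG a b (Ne.symm hb))]
    have hdiagM : ∀ a ∈ s, (c a * c a) * (M L a a * T a a)
        = (L.card : ℂ) / C * (c a * M L a a) := by
      intro a ha
      simp only [hT, if_pos rfl]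
      have e : c a * c a * (M L a a * ((L.card : ℂ) * muC d t a))
          = (c a * muC d t a) * ((L.card : ℂ) * (c a * M L a a)) := by ring
      rw [e, hcmu a ha]
      ring
    have h2 : ∑ a ∈ s, ∑ b ∈ s, (c a * c b) * (M L b a * T a b)
        = (L.card : ℂ) ^ 2 / C := by
      rw [Finset.sum_congr rfl (diag _ (fun a b hab => by simp [hT, hab]))]
      rw [Finset.sum_congr rfl hdiagM, ← Finset.mul_sum, h1]
      ring
    have h3 : ∑ a ∈ s, ∑ b ∈ s, (c a * c b) * (M L a b * T a b)
        = (L.card : ℂ) ^ 2 / C := by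
      rw [Finset.sum_congr rfl (diag _ (fun a b hab => by simp [hT, hab]))]
      rw [Finset.sum_congr rfl hdiagM, ← Finset.mul_sum, h1]
      ring
    have h4 : ∑ a ∈ s, ∑ b ∈ s, (c a * c b) * (T a b * T a b)
        = (L.card : ℂ) ^ 2 / C := by
      rw [Finset.sum_congr rfl (diag _ (fun a b hab => by simp [hT, hab]))]
      have hdiagT : ∀ a ∈ s, (c a * c a) * (T a a * T a a)
          = (L.card : ℂ) ^ 2 / C ^ 2 := by
        intro a ha
        simp only [hT, if_pos rfl]
        have e : c a * c a * ((L.card : ℂ) * muC d t a * ((L.card : ℂ) * muC d t a))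
            = (c a * muC d t a) * (c a * muC d t a) * (L.card : ℂ) ^ 2 := by ring
        rw [e, hcmu a ha]
        ring
      rw [Finset.sum_congr rfl hdiagT, Finset.sum_const, hsdef, card_piAntidiag_univ,
        nsmul_eq_mul, ← hC]
      rw [eq_div_iff hCne]
      field_simp
    rw [h2, h3, h4]
    ring
  -- deduce entrywise equality
  have key : ∀ a ∈ s, ∀ b ∈ s, M L a b = T a b := by
    have hreal : ∑ p ∈ s ×ˢ s,
        ((Nat.multinomial (univ : Finset (Fin d)) p.1 *
          Nat.multinomial (univ : Finset (Fin d)) p.2 : ℝ) *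
          Complex.normSq (M L p.1 p.2 - T p.1 p.2)) = 0 := by
      have : ((∑ p ∈ s ×ˢ s,
          ((Nat.multinomial (univ : Finset (Fin d)) p.1 *
            Nat.multinomial (univ : Finset (Fin d)) p.2 : ℝ) *
            Complex.normSq (M L p.1 p.2 - T p.1 p.2)) : ℝ) : ℂ) = 0 := by
        rw [← hDC, Finset.sum_product]
        push_cast
        refine Finset.sum_congr rfl fun a _ => Finset.sum_congr rfl fun b _ => ?_
        rw [Complex.mul_conj]
      exact_mod_cast this
    intro a ha b hb
    have hterm := (Finset.sum_eq_zero_iff_of_nonneg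
        (fun p _ => mul_nonneg (by positivity) (Complex.normSq_nonneg _))).mp hreal
      (a, b) (Finset.mem_product.mpr ⟨ha, hb⟩)
    have hpos : (0 : ℝ) < (Nat.multinomial (univ : Finset (Fin d)) a *
        Nat.multinomial (univ : Finset (Fin d)) b : ℝ) := by
      have := Nat.multinomial_pos (univ : Finset (Fin d)) a
      have := Nat.multinomial_pos (univ : Finset (Fin d)) b
      positivity
    have hns : Complex.normSq (M L a b - T a b) = 0 := by
      rcases mul_eq_zero.mp hterm with h1 | h2
      · exact absurd h1 hpos.ne'
      · exact h2
    exact sub_eq_zero.mp (Complex.normSq_eq_zero.mp hns)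
  intro a b ha hb
  have haS : a ∈ s := by
    rw [hsdef, Finset.mem_piAntidiag]
    exact ⟨ha, fun i _ => Finset.mem_univ i⟩
  have hbS : b ∈ s := by
    rw [hsdef, Finset.mem_piAntidiag]
    exact ⟨hb, fun i _ => Finset.mem_univ i⟩
  simpa [hT] using key a haS b hbS
lemma prod_pow_update (z : Fin d → ℂ) (a : Fin d → ℕ) (i : Fin d) :
    ∏ j, z j ^ (Function.update a i (a i + 1)) j = (∏ j, z j ^ a j) * z i := by
  have h : ∀ j : Fin d, z j ^ (Function.update a i (a i + 1)) j
      = z j ^ a j * (if j = i then z j else 1) := by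
    intro j
    by_cases hj : j = i
    · subst hj; simp [pow_succ]
    · simp [Function.update_of_ne hj, hj]
  rw [Finset.prod_congr rfl (fun j _ => h j), Finset.prod_mul_distrib]
  simp

lemma sum_update (a : Fin d → ℕ) (i : Fin d) :
    ∑ j, (Function.update a i (a i + 1)) j = (∑ j, a j) + 1 := by
  have h : ∀ j : Fin d, (Function.update a i (a i + 1)) j
      = a j + (if j = i then 1 else 0) := by
    intro j
    by_cases hj : j = i
    · subst hj; simp
    · simp [Function.update_of_ne hj, hj]
  rw [Finset.sum_congr rfl (fun j _ => h j), Finset.sum_add_distrib]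
  simp

lemma update_inj_iff (a b : Fin d → ℕ) (i : Fin d) :
    Function.update a i (a i + 1) = Function.update b i (b i + 1) ↔ a = b := by
  constructor
  · intro h
    funext j
    by_cases hj : j = i
    · subst hj
      have := congrFun h j
      simpa using this
    · have := congrFun h j
      simpa [Function.update_of_ne hj] using this
  · rintro rfl; rfl

lemma prod_fact_update (a : Fin d → ℕ) (i : Fin d) :
    (∏ j, ((Function.update a i (a i + 1)) j).factorial : ℂ)
      = (a i + 1) * ∏ j, ((a j).factorial : ℂ) := by
  have h : ∀ j : Fin d, (((Function.update a i (a i + 1)) j).factorial : ℂ)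
      = ((a j).factorial : ℂ) * (if j = i then ((a i : ℂ) + 1) else 1) := by
    intro j
    by_cases hj : j = i
    · subst hj
      simp [Nat.factorial_succ]
      push_cast
      ring
    · simp [Function.update_of_ne hj, hj]
  rw [Finset.prod_congr rfl (fun j _ => h j), Finset.prod_mul_distrib]
  simp [mul_comm]

theorem descend {d : ℕ} (hd : 1 ≤ d) (L : Finset (Fin d → ℂ))
    (hs : ∀ x ∈ L, cInner x x = 1) (k : ℕ) (H : Des L (k + 1)) : Des L k := by
  intro a b ha hb
  have step : M L a b = ∑ i, M L (Function.update a i (a i + 1))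
      (Function.update b i (b i + 1)) := by
    rw [M]
    have : ∀ x ∈ L, (∏ i, (x i) ^ (a i)) * ∏ i, ((starRingEnd ℂ) (x i)) ^ (b i)
        = ∑ i, (∏ j, (x j) ^ ((Function.update a i (a i + 1)) j)) *
            ∏ j, ((starRingEnd ℂ) (x j)) ^ ((Function.update b i (b i + 1)) j) := by
      intro x hx
      have h1 : (∏ i, (x i) ^ (a i)) * ∏ i, ((starRingEnd ℂ) (x i)) ^ (b i)
          = ((∏ i, (x i) ^ (a i)) * ∏ i, ((starRingEnd ℂ) (x i)) ^ (b i)) * cInner x x := by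
        rw [hs x hx, mul_one]
      rw [h1, cInner, Finset.mul_sum]
      refine Finset.sum_congr rfl fun i _ => ?_
      rw [prod_pow_update x a i]
      have : ∏ j, ((starRingEnd ℂ) (x j)) ^ ((Function.update b i (b i + 1)) j)
          = (∏ j, ((starRingEnd ℂ) (x j)) ^ (b j)) * (starRingEnd ℂ) (x i) :=
        prod_pow_update (fun j => (starRingEnd ℂ) (x j)) b i
      rw [this]
      ring
    rw [Finset.sum_congr rfl this, Finset.sum_comm]
    refine Finset.sum_congr rfl fun i _ => rfl
  rw [step]
  by_cases hab : a = b
  · subst hab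
    simp only [if_pos rfl]
    have heach : ∀ i : Fin d, M L (Function.update a i (a i + 1))
        (Function.update a i (a i + 1))
        = (L.card : ℂ) * muC d (k + 1) (Function.update a i (a i + 1)) := by
      intro i
      have := H (Function.update a i (a i + 1)) (Function.update a i (a i + 1))
        (by rw [sum_update, ha]) (by rw [sum_update, ha])
      simpa using this
    rw [Finset.sum_congr rfl (fun i _ => heach i), ← Finset.mul_sum]
    congr 1
    -- numeric identity: ∑ i, muC d (k+1) (a + e_i) = muC d k a
    have hfac1 : (Nat.factorial (d + k - 1) : ℂ) ≠ 0 := by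
      exact_mod_cast Nat.cast_ne_zero.mpr (Nat.factorial_ne_zero _)
    have hfac2 : (Nat.factorial (d + (k + 1) - 1) : ℂ) ≠ 0 := by
      exact_mod_cast Nat.cast_ne_zero.mpr (Nat.factorial_ne_zero _)
    have hfactsucc : (Nat.factorial (d + (k + 1) - 1) : ℂ)
        = ((d : ℂ) + k) * (Nat.factorial (d + k - 1) : ℂ) := by
      rw [show d + (k + 1) - 1 = (d + k - 1) + 1 from by omega, Nat.factorial_succ]
      have h5 : ((d + k - 1 : ℕ) : ℂ) + 1 = (d : ℂ) + k := by
        exact_mod_cast congrArg (fun m : ℕ => (m : ℂ)) (show (d + k - 1) + 1 = d + k by omega)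
      push_cast
      rw [h5]
    have hsum : ∑ i : Fin d, ((a i : ℂ) + 1) = (k : ℂ) + d := by
      rw [Finset.sum_add_distrib]
      simp only [Finset.sum_const, Finset.card_univ, Fintype.card_fin, nsmul_eq_mul, mul_one]
      rw [← Nat.cast_sum, ha]
    calc ∑ i, muC d (k + 1) (Function.update a i (a i + 1))
        = ∑ i, ((a i : ℂ) + 1) * (((Nat.factorial (d - 1) : ℂ) *
            ∏ j, ((a j).factorial : ℂ)) / (Nat.factorial (d + (k + 1) - 1) : ℂ)) := by
          refine Finset.sum_congr rfl fun i _ => ?_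
          rw [muC, prod_fact_update]
          push_cast
          ring
      _ = ((k : ℂ) + d) * (((Nat.factorial (d - 1) : ℂ) *
            ∏ j, ((a j).factorial : ℂ)) / (Nat.factorial (d + (k + 1) - 1) : ℂ)) := by
          rw [← Finset.sum_mul, hsum]
      _ = muC d k a := by
          rw [muC, hfactsucc]
          have hdk : ((d : ℂ) + k) ≠ 0 := by
            have : (0 : ℕ) < d + k := by omega
            exact_mod_cast Nat.cast_ne_zero.mpr this.ne'
          field_simp
          ring
  · simp only [if_neg hab]
    refine Finset.sum_eq_zero fun i _ => ?_
    have := H (Function.update a i (a i + 1)) (Function.update b i (b i + 1))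
      (by rw [sum_update, ha]) (by rw [sum_update, hb])
    rw [this, if_neg]
    intro h
    exact hab ((update_inj_iff a b i).mp h)

lemma omega_mul_conj {ω : ℂ} {n : ℕ} (hω : IsPrimitiveRoot ω n) (hn : 0 < n) :
    ω * (starRingEnd ℂ) ω = 1 := by
  have h1 : ω ^ n = 1 := hω.pow_eq_one
  have habs : ‖ω‖ ^ n = 1 := by
    rw [← norm_pow, h1, norm_one]
  have habs1 : ‖ω‖ = 1 := by
    rcases (pow_eq_one_iff_cases).mp habs with h | h | h
    · omega
    · exact h
    · exfalso; linarith [h.1, norm_nonneg ω]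
  rw [Complex.mul_conj, Complex.normSq_eq_norm_sq, habs1]
  norm_num

lemma pow_eq_pow_false {ω : ℂ} {n t : ℕ} (hω : IsPrimitiveRoot ω n) (hn : 1 < n)
    (hcop : ∀ m : ℕ, 2 ≤ m → m ≤ t → Nat.Coprime n m)
    {k l : ℕ} (hk : k ≤ t) (hl : l ≤ t) (hkl : k < l) (h : ω ^ k = ω ^ l) : False := by
  have hωne : ω ≠ 0 := by
    intro h0
    have := hω.pow_eq_one
    rw [h0, zero_pow (by omega)] at this
    exact zero_ne_one this
  have hsplit : ω ^ l = ω ^ k * ω ^ (l - k) := by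
    rw [← pow_add]
    congr 1
    omega
  have h2 : ω ^ (l - k) = 1 := by
    have h3 : ω ^ k * 1 = ω ^ k * ω ^ (l - k) := by
      rw [mul_one]
      exact h.trans hsplit
    exact (mul_left_cancel₀ (pow_ne_zero _ hωne) h3).symm
  have hdvd : n ∣ (l - k) := hω.dvd_of_pow_eq_one _ h2
  have hm1 : 1 ≤ l - k := by omega
  have hmt : l - k ≤ t := by omega
  rcases Nat.lt_or_ge (l - k) 2 with h2' | h2'
  · have : l - k = 1 := by omega
    rw [this] at hdvd
    have := Nat.le_of_dvd one_pos hdvd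
    omega
  · have hcp := hcop (l - k) h2' hmt
    have := Nat.dvd_gcd (dvd_refl n) hdvd
    rw [Nat.Coprime] at hcp
    rw [hcp] at this
    have := Nat.le_of_dvd one_pos this
    omega

lemma geom_sum_zero {ω : ℂ} {n t : ℕ} (hω : IsPrimitiveRoot ω n) (hn : 1 < n)
    (hcop : ∀ m : ℕ, 2 ≤ m → m ≤ t → Nat.Coprime n m)
    {k l : ℕ} (hk : k ≤ t) (hl : l ≤ t) (hkl : k ≠ l) :
    ∑ i ∈ Finset.range n, (ω ^ k * ((starRingEnd ℂ) ω) ^ l) ^ i = 0 := by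
  set ζ : ℂ := ω ^ k * ((starRingEnd ℂ) ω) ^ l with hζ
  have hωne : ω ≠ 0 := by
    intro h0
    have := hω.pow_eq_one
    rw [h0, zero_pow (by omega)] at this
    exact zero_ne_one this
  have hconj : (starRingEnd ℂ) ω = ω⁻¹ :=
    eq_inv_of_mul_eq_one_left (by rw [mul_comm]; exact omega_mul_conj hω (by omega))
  have hζn : ζ ^ n = 1 := by
    rw [hζ, mul_pow, ← pow_mul, ← pow_mul, mul_comm k n, mul_comm l n, pow_mul, pow_mul,
      hω.pow_eq_one, ← map_pow, hω.pow_eq_one, map_one, one_pow, one_pow, one_mul]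
  have hζ1 : ζ ≠ 1 := by
    intro h
    rw [hζ, hconj, inv_pow] at h
    have hlne : ω ^ l ≠ 0 := pow_ne_zero _ hωne
    have : ω ^ k = ω ^ l := by
      field_simp at h
      exact h
    rcases lt_or_gt_of_ne hkl with hlt | hlt
    · exact pow_eq_pow_false hω hn hcop hk hl hlt this
    · exact pow_eq_pow_false hω hn hcop hl hk hlt this.symm
  rw [geom_sum_eq hζ1, hζn]
  simp


end Stmt4


open Stmt4

/-- if the lines spanned by `L` form a complex projective `t`-design
and `n > 1` is coprime to `2,…,t`, then the `n`-antipodal cover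
`X = ⋃_{i<n} ω^i L` is a complex spherical `T`-design for
`T = {(k,l) : k ≤ t, l ≤ t}`. -/
theorem stmt_4 {d n : ℕ} (t : ℕ) (ht : 1 ≤ t) (ω : ℂ) (hω : IsPrimitiveRoot ω n)
    (hn : 1 < n) (hcop : ∀ m : ℕ, 2 ≤ m → m ≤ t → Nat.Coprime n m)
    (L : Finset (Fin d → ℂ)) (hLsphere : ∀ x ∈ L, cInner x x = 1)
    (hLa : ∀ x ∈ L, ∀ y ∈ L, x ≠ y → ‖cInner x y‖ < 1)
    (hdisj : ∀ i j : ℕ, i < n → j < n → i ≠ j →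
      Disjoint (L.image fun x => ω ^ i • x) (L.image fun x => ω ^ j • x))
    (hproj : ∑ x ∈ L, ∑ y ∈ L, ‖cInner x y‖ ^ (2 * t) =
      (L.card : ℝ) ^ 2 / ((d + t - 1).choose t)) :
    IsDesign d ((Finset.range n).biUnion fun i => L.image fun x => ω ^ i • x)
      ((Finset.range (t + 1)) ×ˢ (Finset.range (t + 1))) := by
  classical
  rcases Nat.eq_zero_or_pos d with hd0 | hdpos
  · -- dimension 0 : L is empty
    subst hd0
    have hLem : L = ∅ := by
      rcases Finset.eq_empty_or_nonempty L with h | h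
      · exact h
      · obtain ⟨x, hx⟩ := h
        have := hLsphere x hx
        simp [cInner] at this
    have hXe : ((Finset.range n).biUnion fun i => L.image fun x => ω ^ i • x) = ∅ := by
      ext z
      simp [hLem]
    intro kl hkl a b ha hb
    rw [hXe]
    simp
  · have hωne : ω ≠ 0 := by
      intro h0
      have := hω.pow_eq_one
      rw [h0, zero_pow (by omega)] at this
      exact zero_ne_one this
    -- complex version of the projective design hypothesis
    have hP : ∑ x ∈ L, ∑ y ∈ L, (cInner x y) ^ t * (cInner y x) ^ t
        = (L.card : ℂ) ^ 2 / ((d + t - 1).choose t : ℂ) := by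
      have hterm : ∀ x y : Fin d → ℂ, (cInner x y) ^ t * (cInner y x) ^ t
          = ((‖cInner x y‖ : ℝ) : ℂ) ^ (2 * t) := by
        intro x y
        rw [← conj_cInner x y, ← mul_pow, Complex.mul_conj, Complex.normSq_eq_norm_sq]
        push_cast
        rw [← pow_mul]
      rw [show (L.card : ℂ) ^ 2 / ((d + t - 1).choose t : ℂ)
          = (((L.card : ℝ) ^ 2 / ((d + t - 1).choose t : ℝ) : ℝ) : ℂ) from by push_cast; ring]
      rw [← hproj]
      push_cast
      exact Finset.sum_congr rfl fun x _ => Finset.sum_congr rfl fun y _ => hterm x y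
    -- the design property of L at all levels up to t
    have hDt : Des L t := level_t hdpos t L hLsphere hP
    have hDlev : ∀ j : ℕ, Des L (t - j) := by
      intro j
      induction j with
      | zero => simpa using hDt
      | succ j ih =>
        rcases Nat.lt_or_ge j t with hj | hj
        · have h' : Des L (t - (j + 1) + 1) := by
            rw [show t - (j + 1) + 1 = t - j from by omega]
            exact ih
          exact descend hdpos L hLsphere (t - (j + 1)) h'
        · rw [show t - (j + 1) = t - j from by omega]
          exact ih
    have hDes : ∀ k, k ≤ t → Des L k := by
      intro k hk
      have := hDlev (t - k)
      rwa [show t - (t - k) = k from by omega] at this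
    -- injectivity and cardinality
    have hinj : ∀ i : ℕ, Function.Injective (fun x : Fin d → ℂ => ω ^ i • x) := by
      intro i x y h
      exact smul_right_injective (Fin d → ℂ) (pow_ne_zero i hωne) h
    have hpd : Set.PairwiseDisjoint ↑(Finset.range n)
        (fun i => L.image fun x => ω ^ i • x) := by
      intro i hi j hj hij
      exact hdisj i j (Finset.mem_range.mp (Finset.mem_coe.mp hi))
        (Finset.mem_range.mp (Finset.mem_coe.mp hj)) hij
    have hcard : ((Finset.range n).biUnion fun i => L.image fun x => ω ^ i • x).card
        = n * L.card := by
      rw [Finset.card_biUnion (fun i hi j hj hij =>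
        hdisj i j (Finset.mem_range.mp hi) (Finset.mem_range.mp hj) hij)]
      rw [Finset.sum_congr rfl (fun i _ => Finset.card_image_of_injective L (hinj i))]
      rw [Finset.sum_const, Finset.card_range, smul_eq_mul]
    intro kl hkl a b ha hb
    obtain ⟨hk1, hk2⟩ := Finset.mem_product.mp hkl
    have hkt : kl.1 ≤ t := by have := Finset.mem_range.mp hk1; omega
    have hlt' : kl.2 ≤ t := by have := Finset.mem_range.mp hk2; omega
    have hsplit : ∑ z ∈ ((Finset.range n).biUnion fun i => L.image fun x => ω ^ i • x),
          (∏ i, (z i) ^ (a i)) * ∏ i, ((starRingEnd ℂ) (z i)) ^ (b i)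
        = (∑ i ∈ Finset.range n, (ω ^ kl.1 * ((starRingEnd ℂ) ω) ^ kl.2) ^ i) * M L a b := by
      rw [Finset.sum_biUnion hpd, Finset.sum_mul]
      refine Finset.sum_congr rfl fun i _ => ?_
      rw [Finset.sum_image (fun x _ y _ h => hinj i h), M, Finset.mul_sum]
      refine Finset.sum_congr rfl fun x _ => ?_
      have e1 : ∏ j, ((ω ^ i • x) j) ^ (a j)
          = (ω ^ i) ^ (∑ j, a j) * ∏ j, (x j) ^ (a j) := by
        simp only [Pi.smul_apply, smul_eq_mul, mul_pow]
        rw [Finset.prod_mul_distrib, Finset.prod_pow_eq_pow_sum]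
      have e2 : ∏ j, ((starRingEnd ℂ) ((ω ^ i • x) j)) ^ (b j)
          = (((starRingEnd ℂ) ω) ^ i) ^ (∑ j, b j)
            * ∏ j, ((starRingEnd ℂ) (x j)) ^ (b j) := by
        simp only [Pi.smul_apply, smul_eq_mul, map_mul, map_pow, mul_pow]
        rw [Finset.prod_mul_distrib, Finset.prod_pow_eq_pow_sum]
      rw [e1, e2, ha, hb]
      ring
    rw [hsplit]
    by_cases hkl2 : kl.1 = kl.2
    · have hgeom : ∑ i ∈ Finset.range n, (ω ^ kl.1 * ((starRingEnd ℂ) ω) ^ kl.2) ^ i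
          = (n : ℂ) := by
        have hone : ω ^ kl.1 * ((starRingEnd ℂ) ω) ^ kl.2 = 1 := by
          rw [← hkl2, ← mul_pow, omega_mul_conj hω (by omega), one_pow]
        rw [hone]
        simp
      have hbsum : ∑ i, b i = kl.1 := by rw [hb, hkl2]
      rw [hgeom, hDes kl.1 hkt a b ha hbsum, hcard]
      by_cases hab : a = b
      · simp only [if_pos hab, monomialAvg, muC, ha]
        push_cast
        ring
      · simp [hab, monomialAvg]
    · have hgeom := geom_sum_zero hω hn hcop hkt hlt' hkl2
      rw [hgeom, zero_mul]
      have hab : a ≠ b := fun h => hkl2 (by rw [← ha, ← hb, h])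
      simp [monomialAvg, hab]
end

section
/- Let d ≥ 1, let X be a finite nonempty subset of Ω(d), and let t be a positive integer. Then X is a complex spherical 𝒯-design for 𝒯 = {(k,l) ∈ ℕ×ℕ : k+l ≤ t} if and only if φ(X) is a real spherical t-design on the unit sphere S^{2d−1} ⊆ ℝ^{2d}, where φ : ℂ^d → ℝ^{2d} is given by φ(x₁,…,x_d) = (Re x₁, Im x₁, …, Re x_d, Im x_d). -/
open Finset

open scoped Classical

/-- `λ_{m,k} = k / (m + 2k - 2)` in the Gegenbauer recursion. -/
noncomputable def glam (m k : ℕ) : ℝ := (k : ℝ) / ((m : ℝ) + 2 * k - 2)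

/-- The Gegenbauer polynomials `Q_{m,k}`. -/
noncomputable def gegen (m : ℕ) : ℕ → ℝ → ℝ
  | 0, _ => 1
  | 1, u => (m : ℝ) * u
  | (k + 2), u =>
      (u * gegen m (k + 1) u + (glam m k - 1) * gegen m k u) / glam m (k + 2)

/-- The embedding `φ : ℂ^d → ℝ^{2d}` sending `x` to the list of real and
imaginary parts of its coordinates (indexed by `Fin d × Bool`). -/
noncomputable def phi (d : ℕ) (x : Fin d → ℂ) : Fin d × Bool → ℝ :=
  fun p => if p.2 then (x p.1).im else (x p.1).re

namespace Stmt5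
noncomputable def nuE (e n : ℕ) : ℝ :=
  if n % 2 = 0 then
    ((Nat.factorial n : ℝ) * (Nat.factorial (e - 1) : ℝ)) /
      ((4 : ℝ) ^ (n / 2) * (Nat.factorial (n / 2) : ℝ) * (Nat.factorial (e + n / 2 - 1) : ℝ))
  else 0
lemma nuE_odd (e n : ℕ) (h : n % 2 = 1) : nuE e n = 0 := by simp [nuE, h]
lemma nuE_two_mul (e s : ℕ) :
    nuE e (2 * s) = ((Nat.factorial (2*s) : ℝ) * (Nat.factorial (e - 1) : ℝ)) /
      ((4 : ℝ) ^ s * (Nat.factorial s : ℝ) * (Nat.factorial (e + s - 1) : ℝ)) := by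
  have h1 : 2 * s % 2 = 0 := by omega
  have h2 : 2 * s / 2 = s := by omega
  simp [nuE, h1, h2]
lemma nuE_zero (e : ℕ) : nuE e 0 = 1 := by
  have h : (Nat.factorial (e - 1) : ℝ) ≠ 0 := by exact_mod_cast Nat.factorial_ne_zero _
  simp [nuE, Nat.factorial, h]
noncomputable def gam (m : ℕ) : ℕ → ℝ
  | 0 => 1
  | i + 1 => (1 - glam m i) * gam m i / (i + 1)
noncomputable def TT (d j i : ℕ) : ℝ :=
  gam (2*d) i * (Nat.descFactorial j i : ℝ) * nuE (d + i) (j - i)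

lemma glam_pos (m k : ℕ) (hm : 2 ≤ m) (hk : 1 ≤ k) : 0 < glam m k := by
  apply div_pos (by exact_mod_cast hk)
  have h1 : (2:ℝ) ≤ (m:ℝ) := by exact_mod_cast hm
  have h2 : (1:ℝ) ≤ (k:ℝ) := by exact_mod_cast hk
  nlinarith

lemma glam_ne (m k : ℕ) (hm : 2 ≤ m) : glam m (k+2) ≠ 0 :=
  ne_of_gt (glam_pos m (k+2) hm (by omega))

lemma gegen_rec (m : ℕ) (hm : 2 ≤ m) (k : ℕ) (u : ℝ) :
    u * gegen m (k+1) u = glam m (k+2) * gegen m (k+2) u + (1 - glam m k) * gegen m k u := by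
  have h : gegen m (k+2) u
      = (u * gegen m (k + 1) u + (glam m k - 1) * gegen m k u) / glam m (k+2) := rfl
  rw [h, mul_div_cancel₀ _ (glam_ne m k hm)]
  ring

lemma TT_zero_right (d j : ℕ) : TT d j 0 = nuE d j := by
  simp [TT, gam]

lemma TT_zero_left (d i : ℕ) (hi : 1 ≤ i) : TT d 0 i = 0 := by
  have h : Nat.descFactorial 0 i = 0 := by
    cases i with
    | zero => omega
    | succ n => simp [Nat.descFactorial]
  simp [TT, h]


lemma fact_cast_succ (n : ℕ) : ((Nat.factorial (n+1) : ℝ)) = (n+1) * Nat.factorial n := by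
  rw [Nat.factorial_succ]; push_cast; ring

lemma key (d : ℕ) (hd : 1 ≤ d) (j i : ℕ) :
    glam (2*d) (i+2) * TT d j (i+2) = TT d (j+1) (i+1) + (glam (2*d) i - 1) * TT d j i := by
  obtain ⟨d0, rfl⟩ : ∃ d0, d = d0 + 1 := ⟨d - 1, by omega⟩
  rcases lt_or_ge j i with hji | hji
  · -- j < i : all descFactorials vanish
    have h1 : Nat.descFactorial j (i+2) = 0 := Nat.descFactorial_eq_zero_iff_lt.2 (by omega)
    have h2 : Nat.descFactorial (j+1) (i+1) = 0 := Nat.descFactorial_eq_zero_iff_lt.2 (by omega)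
    have h3 : Nat.descFactorial j i = 0 := Nat.descFactorial_eq_zero_iff_lt.2 (by omega)
    rw [TT, TT, TT, h1, h2, h3]
    push_cast
    ring
  rcases eq_or_lt_of_le hji with rfl | hji2
  · -- j = i
    have h1 : Nat.descFactorial i (i+2) = 0 := Nat.descFactorial_eq_zero_iff_lt.2 (by omega)
    have h2 : (i+1).descFactorial (i+1) = Nat.factorial (i+1) := Nat.descFactorial_self _
    have h3 : i.descFactorial i = Nat.factorial i := Nat.descFactorial_self _
    have h4 : i + 1 - (i+1) = 0 := by omega
    have h5 : i - i = 0 := by omega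
    rw [TT, TT, TT, h1, h2, h3, h4, h5, nuE_zero, nuE_zero]
    show _ = gam (2*(d0+1)) (i+1) * (Nat.factorial (i+1) : ℝ) * 1 + _
    rw [show gam (2*(d0+1)) (i+1) = (1 - glam (2*(d0+1)) i) * gam (2*(d0+1)) i / (i + 1) from rfl,
        fact_cast_succ]
    have hne : ((i:ℝ)+1) ≠ 0 := by positivity
    field_simp
    ring
  -- now j > i
  rcases eq_or_lt_of_le (show i + 1 ≤ j from hji2) with hji3 | hji4
  · -- j = i + 1
    have rfl2 : j = i + 1 := hji3.symm
    subst rfl2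
    have h1 : Nat.descFactorial (i+1) (i+2) = 0 := Nat.descFactorial_eq_zero_iff_lt.2 (by omega)
    have h4 : i + 1 + 1 - (i+1) = 1 := by omega
    have h5 : i + 1 - i = 1 := by omega
    rw [TT, TT, TT, h1, h4, h5, nuE_odd _ 1 rfl, nuE_odd _ 1 rfl]
    push_cast
    ring
  -- j ≥ i + 2
  obtain ⟨r, hr⟩ : ∃ r, j = i + 2 + r := ⟨j - (i+2), by omega⟩
  subst hr
  rcases Nat.even_or_odd r with ⟨s, hs⟩ | ⟨s, hs⟩
  · -- main case : r = 2s
    subst hs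
    have e1 : i + 2 + (s + s) - (i + 2) = 2 * s := by omega
    have e2 : i + 2 + (s + s) + 1 - (i + 1) = 2 * (s + 1) := by omega
    have e3 : i + 2 + (s + s) - i = 2 * (s + 1) := by omega
    have dF1 : Nat.descFactorial (i + 2 + (s + s)) (i + 2)
        = (2*s+1) * ((2*s+2) * Nat.descFactorial (i + 2 + (s+s)) i) := by
      rw [Nat.descFactorial_succ, Nat.descFactorial_succ,
        show i+2+(s+s) - (i+1) = 2*s+1 from by omega,
        show i+2+(s+s) - i = 2*s+2 from by omega]
    have dF2 : Nat.descFactorial (i + 2 + (s + s) + 1) (i + 1)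
        = (i + 2 + (s+s) + 1) * Nat.descFactorial (i + 2 + (s+s)) i := by
      rw [Nat.succ_descFactorial_succ]
    have f1 : Nat.factorial (2*(s+1)) = (2*s+2) * ((2*s+1) * Nat.factorial (2*s)) := by
      rw [show 2*(s+1) = (2*s+1)+1 from by omega, Nat.factorial_succ,
        show (2*s+1) = (2*s)+1 from by omega, Nat.factorial_succ]
    have f2 : Nat.factorial (d0+i+2) = (d0+i+2) * ((d0+i+1) * Nat.factorial (d0+i)) := by
      rw [show d0+i+2 = (d0+i+1)+1 from by omega, Nat.factorial_succ,
        show d0+i+1 = (d0+i)+1 from by omega, Nat.factorial_succ]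
    have f3 : Nat.factorial (d0+i+1) = (d0+i+1) * Nat.factorial (d0+i) := by
      rw [show d0+i+1 = (d0+i)+1 from by omega, Nat.factorial_succ]
    have f4 : Nat.factorial (d0+i+s+2) = (d0+i+s+2) * Nat.factorial (d0+i+s+1) := by
      rw [show d0+i+s+2 = (d0+i+s+1)+1 from by omega, Nat.factorial_succ]
    have f5 : Nat.factorial (s+1) = (s+1) * Nat.factorial s := Nat.factorial_succ s
    rw [TT, TT, TT, e1, e2, e3, dF1, dF2, nuE_two_mul, nuE_two_mul, nuE_two_mul,
        show d0 + 1 + (i + 2) - 1 = d0 + i + 2 from by omega,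
        show d0 + 1 + (i + 2) + s - 1 = d0 + i + s + 2 from by omega,
        show d0 + 1 + (i + 1) - 1 = d0 + i + 1 from by omega,
        show d0 + 1 + (i + 1) + (s + 1) - 1 = d0 + i + s + 2 from by omega,
        show d0 + 1 + i - 1 = d0 + i from by omega,
        show d0 + 1 + i + (s + 1) - 1 = d0 + i + s + 1 from by omega,
        f1, f2, f3, f4, f5]
    have hkey : (glam (2*(d0+1)) i - 1) * (gam (2*(d0+1)) i)
        = -(((i:ℝ)+1) * gam (2*(d0+1)) (i+1)) := by
      rw [show gam (2*(d0+1)) (i+1) = (1 - glam (2*(d0+1)) i) * gam (2*(d0+1)) i / (i + 1) from rfl]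
      have h : ((i:ℝ)+1) ≠ 0 := by positivity
      field_simp
      ring
    have hgam2 : gam (2*(d0+1)) (i+2)
        = (1 - glam (2*(d0+1)) (i+1)) * gam (2*(d0+1)) (i+1) / (((i+1 : ℕ) : ℝ) + 1) := rfl
    have hglam2 : glam (2*(d0+1)) (i+2) = ((i:ℝ)+2) / (2*((d0:ℝ)+i+2)) := by
      rw [glam]; push_cast; ring_nf
    have hglam1 : glam (2*(d0+1)) (i+1) = ((i:ℝ)+1) / (2*((d0:ℝ)+i+1)) := by
      rw [glam]; push_cast; ring_nf
    have hmul : ∀ A B : ℝ, (glam (2*(d0+1)) i - 1) * (gam (2*(d0+1)) i * A * B) =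
        ((glam (2*(d0+1)) i - 1) * (gam (2*(d0+1)) i)) * (A * B) := by intro A B; ring
    rw [hmul, hkey, hgam2, hglam2, hglam1]
    generalize gam (2*(d0+1)) (i+1) = g1
    have n1 : ((Nat.factorial s : ℝ)) ≠ 0 := by exact_mod_cast Nat.factorial_ne_zero s
    have n2 : ((Nat.factorial (2*s) : ℝ)) ≠ 0 := by exact_mod_cast Nat.factorial_ne_zero _
    have n3 : ((Nat.factorial (d0+i) : ℝ)) ≠ 0 := by exact_mod_cast Nat.factorial_ne_zero _
    have n4 : ((Nat.factorial (d0+i+s+1) : ℝ)) ≠ 0 := by exact_mod_cast Nat.factorial_ne_zero _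
    have n5 : (4:ℝ) ^ s ≠ 0 := by positivity
    have n6 : ((d0:ℝ)+i+2) ≠ 0 := by positivity
    have n7 : ((d0:ℝ)+i+1) ≠ 0 := by positivity
    have n8 : ((i:ℝ)+1) ≠ 0 := by positivity
    have n9 : ((i:ℝ)+2) ≠ 0 := by positivity
    have n10 : ((s:ℝ)+1) ≠ 0 := by positivity
    have n11 : ((d0:ℝ)+i+s+2) ≠ 0 := by positivity
    push_cast
    field_simp
    ring
  · -- r odd
    subst hs
    have e1 : (i + 2 + (2*s+1) - (i + 2)) % 2 = 1 := by omega
    have e2 : (i + 2 + (2*s+1) + 1 - (i + 1)) % 2 = 1 := by omega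
    have e3 : (i + 2 + (2*s+1) - i) % 2 = 1 := by omega
    rw [TT, TT, TT, nuE_odd _ _ e1, nuE_odd _ _ e2, nuE_odd _ _ e3]
    ring

lemma gam_one (m : ℕ) : gam m 1 = 1 := by
  show (1 - glam m 0) * gam m 0 / ((0:ℕ) + 1 : ℝ) = 1
  simp [glam, gam]

lemma id1 (d : ℕ) (hd : 1 ≤ d) (j : ℕ) : TT d j 1 = (2*(d:ℝ)) * nuE d (j+1) := by
  obtain ⟨d0, rfl⟩ : ∃ d0, d = d0 + 1 := ⟨d - 1, by omega⟩
  rw [TT, gam_one, Nat.descFactorial_one]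
  cases j with
  | zero => simp [nuE_odd _ 1 rfl]
  | succ j' =>
    have hsub : j' + 1 - 1 = j' := by omega
    rw [hsub]
    rcases Nat.even_or_odd j' with ⟨s, hs⟩ | ⟨s, hs⟩
    · subst hs
      rw [show s + s = 2*s from by omega, nuE_two_mul,
          show 2*s + 1 + 1 = 2*(s+1) from by omega, nuE_two_mul,
          show d0 + 1 + 1 - 1 = d0 + 1 from by omega,
          show d0 + 1 + 1 + s - 1 = d0 + s + 1 from by omega,
          show d0 + 1 - 1 = d0 from by omega,
          show d0 + 1 + (s+1) - 1 = d0 + s + 1 from by omega,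
          show Nat.factorial (2*(s+1)) = (2*s+2) * ((2*s+1) * Nat.factorial (2*s)) from by
            rw [show 2*(s+1) = (2*s+1)+1 from by omega, Nat.factorial_succ,
              show (2*s+1) = (2*s)+1 from by omega, Nat.factorial_succ],
          show Nat.factorial (d0+1) = (d0+1) * Nat.factorial d0 from Nat.factorial_succ d0,
          show Nat.factorial (s+1) = (s+1) * Nat.factorial s from Nat.factorial_succ s]
      have n1 : ((Nat.factorial s : ℝ)) ≠ 0 := by exact_mod_cast Nat.factorial_ne_zero s
      have n2 : ((Nat.factorial (d0+s+1) : ℝ)) ≠ 0 := by exact_mod_cast Nat.factorial_ne_zero _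
      have n3 : (4:ℝ) ^ s ≠ 0 := by positivity
      have n4 : ((s:ℝ)+1) ≠ 0 := by positivity
      push_cast
      field_simp
      ring
    · subst hs
      rw [nuE_odd _ _ (by omega), nuE_odd _ _ (by omega)]
      ring


section Sums
variable {P : Type*} [DecidableEq P] (F : Finset P) (w : P → ℝ)

noncomputable def Sj (m j i : ℕ) : ℝ := ∑ p ∈ F, w p ^ j * gegen m i (w p)

noncomputable def Rj (j : ℕ) : ℝ := ∑ p ∈ F, w p ^ j

lemma gegen_zero (m : ℕ) (u : ℝ) : gegen m 0 u = 1 := rfl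
lemma gegen_one (m : ℕ) (u : ℝ) : gegen m 1 u = m * u := rfl

lemma Sj_zero (m j : ℕ) : Sj F w m j 0 = Rj F w j := by
  unfold Sj Rj; refine Finset.sum_congr rfl fun p _ => ?_; rw [gegen_zero]; ring

lemma Sj_one (m j : ℕ) : Sj F w m j 1 = (m : ℝ) * Rj F w (j+1) := by
  unfold Sj Rj; rw [Finset.mul_sum]
  refine Finset.sum_congr rfl fun p _ => ?_; rw [gegen_one]; ring

lemma Sj_rec (m : ℕ) (hm : 2 ≤ m) (j i : ℕ) :
    glam m (i+2) * Sj F w m j (i+2) = Sj F w m (j+1) (i+1) + (glam m i - 1) * Sj F w m j i := by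
  unfold Sj
  rw [Finset.mul_sum, Finset.mul_sum, ← Finset.sum_add_distrib]
  refine Finset.sum_congr rfl fun p _ => ?_
  have h := gegen_rec m hm i (w p)
  linear_combination (- (w p ^ j)) * h

variable {F w}

lemma R_to_S (d t : ℕ) (hd : 1 ≤ d) (C : ℝ)
    (h : ∀ j, j ≤ t → Rj F w j = C * nuE d j) :
    ∀ i j, i + j ≤ t → Sj F w (2*d) j i = C * TT d j i := by
  intro i
  induction i using Nat.strong_induction_on with
  | _ i ih =>
    match i with
    | 0 => intro j hj; rw [Sj_zero, TT_zero_right]; exact h j (by omega)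
    | 1 =>
      intro j hj
      rw [Sj_one, h (j+1) (by omega), id1 d hd j]
      push_cast; ring
    | (i+2) =>
      intro j hj
      have h1 := ih (i+1) (by omega) (j+1) (by omega)
      have h0 := ih i (by omega) j (by omega)
      have hrec := Sj_rec F w (2*d) (by omega) j i
      have hkey := key d hd j i
      have hne : glam (2*d) (i+2) ≠ 0 := by
        have := glam_pos (2*d) (i+2) (by omega) (by omega); linarith
      apply mul_left_cancel₀ hne
      rw [hrec, h1, h0]
      linear_combination (-C) * hkey

lemma S_to_R (d t : ℕ) (hd : 1 ≤ d) (C : ℝ)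
    (hS0 : Sj F w (2*d) 0 0 = C)
    (h : ∀ i, 1 ≤ i → i ≤ t → Sj F w (2*d) 0 i = 0) :
    ∀ j i, j + i ≤ t → Sj F w (2*d) j i = C * TT d j i := by
  intro j
  induction j with
  | zero =>
    intro i hi
    match i with
    | 0 => rw [hS0]; simp [TT, gam, nuE_zero]
    | (i+1) =>
      rw [h (i+1) (by omega) (by omega), TT_zero_left d (i+1) (by omega)]
      ring
  | succ j ihj =>
    intro i hi
    match i with
    | 0 =>
      have h1 := ihj 1 (by omega)
      rw [Sj_one] at h1
      have hm : ((2*d : ℕ) : ℝ) ≠ 0 := by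
        have : (1:ℝ) ≤ (d:ℝ) := by exact_mod_cast hd
        push_cast; linarith
      rw [Sj_zero, TT_zero_right]
      apply mul_left_cancel₀ hm
      rw [h1, id1 d hd j]
      push_cast; ring
    | (i+1) =>
      have h2 := ihj (i+2) (by omega)
      have h0 := ihj i (by omega)
      have hrec := Sj_rec F w (2*d) (by omega) j i
      have hkey := key d hd j i
      linear_combination (-1 : ℝ) * hrec + glam (2*d) (i+2) * h2
        - (glam (2*d) i - 1) * h0 + C * hkey

end Sums

section Cplx
open Complex
variable {d : ℕ}

/-- shorthand -/
noncomputable def MM (X : Finset (Fin d → ℂ)) (a b : Fin d → ℕ) : ℂ :=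
  ∑ z ∈ X, (∏ i, (z i) ^ (a i)) * ∏ i, ((starRingEnd ℂ) (z i)) ^ (b i)

noncomputable def PP (X : Finset (Fin d → ℂ)) (k l : ℕ) : ℂ :=
  ∑ x ∈ X, ∑ y ∈ X, cInner x y ^ k * ((starRingEnd ℂ) (cInner x y)) ^ l

lemma conj_cInner (x y : Fin d → ℂ) : (starRingEnd ℂ) (cInner x y) = cInner y x := by
  unfold cInner
  rw [map_sum]
  refine Finset.sum_congr rfl fun i _ => ?_
  rw [map_mul, Complex.conj_conj, mul_comm]

lemma cInner_pow (x y : Fin d → ℂ) (k : ℕ) :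
    cInner x y ^ k = ∑ a ∈ piAntidiag (univ : Finset (Fin d)) k,
      (Nat.multinomial univ a : ℂ) * ∏ i, ((starRingEnd ℂ) (x i) * y i) ^ a i := by
  rw [cInner, Finset.sum_pow_eq_sum_piAntidiag]

lemma MM_merged (X : Finset (Fin d → ℂ)) (a b : Fin d → ℕ) :
    MM X a b = ∑ z ∈ X, ∏ i, ((z i) ^ (a i) * ((starRingEnd ℂ) (z i)) ^ (b i)) := by
  unfold MM
  refine Finset.sum_congr rfl fun z _ => (Finset.prod_mul_distrib).symm

lemma conj_MM (X : Finset (Fin d → ℂ)) (a b : Fin d → ℕ) :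
    (starRingEnd ℂ) (MM X a b)
      = ∑ z ∈ X, ∏ i, (((starRingEnd ℂ) (z i)) ^ (a i) * (z i) ^ (b i)) := by
  unfold MM
  rw [map_sum]
  refine Finset.sum_congr rfl fun z _ => ?_
  rw [map_mul, map_prod, map_prod]
  rw [← Finset.prod_mul_distrib]
  refine Finset.prod_congr rfl fun i _ => ?_
  rw [map_pow, map_pow, Complex.conj_conj]

lemma sum4_swap {α β γ δ M : Type*} [AddCommMonoid M] (s₁ : Finset α) (s₂ : Finset β)
    (s₃ : Finset γ) (s₄ : Finset δ) (f : α → β → γ → δ → M) :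
    (∑ x ∈ s₁, ∑ y ∈ s₂, ∑ a ∈ s₃, ∑ b ∈ s₄, f x y a b)
      = ∑ a ∈ s₃, ∑ b ∈ s₄, ∑ x ∈ s₁, ∑ y ∈ s₂, f x y a b := by
  calc (∑ x ∈ s₁, ∑ y ∈ s₂, ∑ a ∈ s₃, ∑ b ∈ s₄, f x y a b)
      = ∑ x ∈ s₁, ∑ a ∈ s₃, ∑ y ∈ s₂, ∑ b ∈ s₄, f x y a b :=
        Finset.sum_congr rfl fun x _ => Finset.sum_comm
    _ = ∑ a ∈ s₃, ∑ x ∈ s₁, ∑ y ∈ s₂, ∑ b ∈ s₄, f x y a b := Finset.sum_comm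
    _ = ∑ a ∈ s₃, ∑ x ∈ s₁, ∑ b ∈ s₄, ∑ y ∈ s₂, f x y a b :=
        Finset.sum_congr rfl fun a _ => Finset.sum_congr rfl fun x _ => Finset.sum_comm
    _ = ∑ a ∈ s₃, ∑ b ∈ s₄, ∑ x ∈ s₁, ∑ y ∈ s₂, f x y a b :=
        Finset.sum_congr rfl fun a _ => Finset.sum_comm

lemma PP_eq (X : Finset (Fin d → ℂ)) (k l : ℕ) :
    PP X k l = ∑ a ∈ piAntidiag (univ : Finset (Fin d)) k,
      ∑ b ∈ piAntidiag (univ : Finset (Fin d)) l,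
        (Nat.multinomial univ a : ℂ) * (Nat.multinomial univ b : ℂ) *
          ((starRingEnd ℂ) (MM X a b) * MM X a b) := by
  have hpt : ∀ x y : Fin d → ℂ,
      cInner x y ^ k * ((starRingEnd ℂ) (cInner x y)) ^ l
        = ∑ a ∈ piAntidiag (univ : Finset (Fin d)) k,
            ∑ b ∈ piAntidiag (univ : Finset (Fin d)) l,
            ((Nat.multinomial univ a : ℂ) * (Nat.multinomial univ b : ℂ)) *
              ((∏ i, (((starRingEnd ℂ) (x i)) ^ (a i) * (x i) ^ (b i))) *
               (∏ i, ((y i) ^ (a i) * ((starRingEnd ℂ) (y i)) ^ (b i)))) := by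
    intro x y
    rw [cInner_pow, conj_cInner, cInner_pow, Finset.sum_mul_sum]
    refine Finset.sum_congr rfl fun a _ => Finset.sum_congr rfl fun b _ => ?_
    simp only [mul_pow, Finset.prod_mul_distrib]
    ring
  unfold PP
  simp only [hpt]
  rw [sum4_swap]
  refine Finset.sum_congr rfl fun a _ => Finset.sum_congr rfl fun b _ => ?_
  rw [conj_MM, MM_merged, Finset.sum_mul_sum]
  rw [Finset.mul_sum]
  refine Finset.sum_congr rfl fun x _ => ?_
  rw [Finset.mul_sum]

noncomputable def nuC (d k : ℕ) : ℂ :=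
  ((Nat.factorial k : ℂ) * (Nat.factorial (d-1) : ℂ)) / (Nat.factorial (d+k-1) : ℂ)

lemma mem_A_sum {k : ℕ} {a : Fin d → ℕ} (ha : a ∈ piAntidiag (univ : Finset (Fin d)) k) :
    ∑ i, a i = k := by
  rw [Finset.mem_piAntidiag] at ha
  exact ha.1

lemma mem_A (k : ℕ) (a : Fin d → ℕ) (ha : ∑ i, a i = k) :
    a ∈ piAntidiag (univ : Finset (Fin d)) k := by
  rw [Finset.mem_piAntidiag]
  exact ⟨ha, fun i _ => Finset.mem_univ i⟩

lemma mult_avg {k : ℕ} {a : Fin d → ℕ} (ha : a ∈ piAntidiag (univ : Finset (Fin d)) k) :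
    (Nat.multinomial univ a : ℂ) * monomialAvg d a a = nuC d k := by
  have hsum := mem_A_sum ha
  have hspec := Nat.multinomial_spec (univ : Finset (Fin d)) a
  rw [monomialAvg, if_pos rfl, hsum, nuC]
  rw [hsum] at hspec
  have hcast : (∏ i, (Nat.factorial (a i) : ℂ)) * (Nat.multinomial univ a : ℂ)
      = (Nat.factorial k : ℂ) := by exact_mod_cast hspec
  have hne : ((Nat.factorial (d+k-1) : ℂ)) ≠ 0 := by
    exact_mod_cast Nat.factorial_ne_zero _
  field_simp
  linear_combination ((Nat.factorial (d-1) : ℂ)) * hcast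

lemma card_A (k : ℕ) :
    (piAntidiag (univ : Finset (Fin d)) k).card = (d + k - 1).choose k := by
  rw [← Finset.map_sym_eq_piAntidiag, Finset.card_map, Finset.sym_univ, Finset.card_univ,
    Sym.card_sym_eq_choose, Fintype.card_fin]

lemma card_nuC (hd : 1 ≤ d) (k : ℕ) :
    ((piAntidiag (univ : Finset (Fin d)) k).card : ℂ) * nuC d k = 1 := by
  rw [card_A, nuC]
  have hid : (d + k - 1).choose k * Nat.factorial k * Nat.factorial (d - 1)
      = Nat.factorial (d + k - 1) := by
    have h1 : k ≤ d + k - 1 := by omega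
    have := Nat.choose_mul_factorial_mul_factorial h1
    rw [show d + k - 1 - k = d - 1 from by omega] at this
    exact this
  have hne : ((Nat.factorial (d+k-1) : ℂ)) ≠ 0 := by
    exact_mod_cast Nat.factorial_ne_zero _
  field_simp
  norm_cast

lemma sphere_sum (X : Finset (Fin d → ℂ)) (hX : ∀ z ∈ X, cInner z z = 1) (k : ℕ) :
    ∑ a ∈ piAntidiag (univ : Finset (Fin d)) k, (Nat.multinomial univ a : ℂ) * MM X a a
      = (X.card : ℂ) := by
  have hpt : ∀ z ∈ X, (1:ℂ) = ∑ a ∈ piAntidiag (univ : Finset (Fin d)) k,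
      (Nat.multinomial univ a : ℂ) * ((∏ i, (z i) ^ (a i)) * ∏ i, ((starRingEnd ℂ) (z i)) ^ (a i)) := by
    intro z hz
    calc (1:ℂ) = cInner z z ^ k := by rw [hX z hz, one_pow]
      _ = _ := by
        rw [cInner_pow]
        refine Finset.sum_congr rfl fun a _ => ?_
        congr 1
        rw [← Finset.prod_mul_distrib]
        refine Finset.prod_congr rfl fun i _ => ?_
        rw [mul_pow]
        ring
  unfold MM
  calc ∑ a ∈ piAntidiag (univ : Finset (Fin d)) k, (Nat.multinomial univ a : ℂ) *
          ∑ z ∈ X, (∏ i, (z i) ^ (a i)) * ∏ i, ((starRingEnd ℂ) (z i)) ^ (a i)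
      = ∑ a ∈ piAntidiag (univ : Finset (Fin d)) k, ∑ z ∈ X, (Nat.multinomial univ a : ℂ) *
          ((∏ i, (z i) ^ (a i)) * ∏ i, ((starRingEnd ℂ) (z i)) ^ (a i)) := by
        simp [Finset.mul_sum]
    _ = ∑ z ∈ X, ∑ a ∈ piAntidiag (univ : Finset (Fin d)) k, (Nat.multinomial univ a : ℂ) *
          ((∏ i, (z i) ^ (a i)) * ∏ i, ((starRingEnd ℂ) (z i)) ^ (a i)) := Finset.sum_comm
    _ = ∑ z ∈ X, (1:ℂ) := Finset.sum_congr rfl fun z hz => (hpt z hz).symm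
    _ = (X.card : ℂ) := by simp

lemma monomialAvg_real (a b : Fin d → ℕ) :
    (starRingEnd ℂ) (monomialAvg d a b) = monomialAvg d a b := by
  unfold monomialAvg
  split
  · rw [map_div₀, map_mul, map_prod]
    push_cast
    simp
  · simp

noncomputable def EE (X : Finset (Fin d → ℂ)) (a b : Fin d → ℕ) : ℂ :=
  MM X a b - (X.card : ℂ) * monomialAvg d a b

noncomputable def DD (X : Finset (Fin d → ℂ)) (k l : ℕ) : ℝ :=
  ∑ a ∈ piAntidiag (univ : Finset (Fin d)) k, ∑ b ∈ piAntidiag (univ : Finset (Fin d)) l,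
    (Nat.multinomial univ a : ℝ) * (Nat.multinomial univ b : ℝ) * Complex.normSq (EE X a b)

lemma DD_nonneg (X : Finset (Fin d → ℂ)) (k l : ℕ) : 0 ≤ DD X k l := by
  refine Finset.sum_nonneg fun a _ => Finset.sum_nonneg fun b _ => ?_
  exact mul_nonneg (mul_nonneg (Nat.cast_nonneg _) (Nat.cast_nonneg _))
    (Complex.normSq_nonneg _)

lemma avg_ne {a b : Fin d → ℕ} (h : a ≠ b) : monomialAvg d a b = 0 := by
  rw [monomialAvg, if_neg h]

lemma sum_mult_EE (hd : 1 ≤ d) (X : Finset (Fin d → ℂ)) (hX : ∀ z ∈ X, cInner z z = 1)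
    (k : ℕ) :
    ∑ a ∈ piAntidiag (univ : Finset (Fin d)) k, (Nat.multinomial univ a : ℂ) * EE X a a = 0 := by
  have h1 : ∑ a ∈ piAntidiag (univ : Finset (Fin d)) k,
      (Nat.multinomial univ a : ℂ) * monomialAvg d a a = 1 := by
    rw [Finset.sum_congr rfl (fun a ha => mult_avg ha), Finset.sum_const, nsmul_eq_mul,
      card_nuC hd k]
  simp only [EE, mul_sub]
  rw [Finset.sum_sub_distrib, sphere_sum X hX k]
  have h2 : ∑ a ∈ piAntidiag (univ : Finset (Fin d)) k,
      (Nat.multinomial univ a : ℂ) * ((X.card : ℂ) * monomialAvg d a a)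
      = (X.card : ℂ) * ∑ a ∈ piAntidiag (univ : Finset (Fin d)) k,
          (Nat.multinomial univ a : ℂ) * monomialAvg d a a := by
    rw [Finset.mul_sum]
    exact Finset.sum_congr rfl fun a _ => by ring
  rw [h2, h1, mul_one, sub_self]

lemma sum_diag {γ : Type*} (A : Finset γ) (g : γ → γ → ℂ)
    (h0 : ∀ a ∈ A, ∀ b ∈ A, a ≠ b → g a b = 0) :
    ∑ a ∈ A, ∑ b ∈ A, g a b = ∑ a ∈ A, g a a :=
  Finset.sum_congr rfl fun a ha =>
    Finset.sum_eq_single_of_mem a ha fun b hb hne => h0 a ha b hb (Ne.symm hne)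

lemma PP_decomp (hd : 1 ≤ d) (X : Finset (Fin d → ℂ)) (hX : ∀ z ∈ X, cInner z z = 1)
    (k l : ℕ) :
    PP X k l = ((DD X k l : ℝ) : ℂ)
      + (if k = l then ((X.card : ℂ))^2 * nuC d k else 0) := by
  set N : ℂ := (X.card : ℂ) with hN
  have hsplit : PP X k l = ((DD X k l : ℝ) : ℂ)
      + ∑ a ∈ piAntidiag (univ : Finset (Fin d)) k,
          ∑ b ∈ piAntidiag (univ : Finset (Fin d)) l,
          (Nat.multinomial univ a : ℂ) * (Nat.multinomial univ b : ℂ) *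
            ((N * monomialAvg d a b) *
              (EE X a b + (starRingEnd ℂ) (EE X a b) + N * monomialAvg d a b)) := by
    rw [PP_eq, DD]
    push_cast
    rw [← Finset.sum_add_distrib]
    refine Finset.sum_congr rfl fun a _ => ?_
    rw [← Finset.sum_add_distrib]
    refine Finset.sum_congr rfl fun b _ => ?_
    have hM : MM X a b = EE X a b + N * monomialAvg d a b := by rw [EE]; ring
    have hMc : (starRingEnd ℂ) (MM X a b)
        = (starRingEnd ℂ) (EE X a b) + N * monomialAvg d a b := by
      rw [hM, map_add, map_mul, monomialAvg_real, hN, map_natCast]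
    have hsq : (starRingEnd ℂ) (EE X a b) * EE X a b
        = ((Complex.normSq (EE X a b) : ℝ) : ℂ) := by
      rw [mul_comm, Complex.mul_conj]
    rw [hMc, hM]
    linear_combination ((Nat.multinomial univ a : ℂ) * (Nat.multinomial univ b : ℂ)) * hsq
  rw [hsplit]
  congr 1
  by_cases hkl : k = l
  · subst hkl
    rw [if_pos rfl]
    have hEE := sum_mult_EE hd X hX k
    have hEEc : ∑ a ∈ piAntidiag (univ : Finset (Fin d)) k,
        (Nat.multinomial univ a : ℂ) * (starRingEnd ℂ) (EE X a a) = 0 := by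
      have h := congrArg (starRingEnd ℂ) hEE
      rw [map_sum] at h
      simpa [map_mul] using h
    rw [sum_diag _ _ (fun a _ b _ hab => by rw [avg_ne hab]; ring)]
    have hterm : ∀ a ∈ piAntidiag (univ : Finset (Fin d)) k,
        (Nat.multinomial univ a : ℂ) * (Nat.multinomial univ a : ℂ) *
          ((N * monomialAvg d a a) *
            (EE X a a + (starRingEnd ℂ) (EE X a a) + N * monomialAvg d a a))
        = N * nuC d k * ((Nat.multinomial univ a : ℂ) * (EE X a a + (starRingEnd ℂ) (EE X a a)))
          + N^2 * nuC d k * ((Nat.multinomial univ a : ℂ) * monomialAvg d a a) := by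
      intro a ha
      have h := mult_avg ha
      linear_combination (N * (Nat.multinomial univ a : ℂ) *
          (EE X a a + (starRingEnd ℂ) (EE X a a)) + N^2 * (Nat.multinomial univ a : ℂ) *
            monomialAvg d a a) * h
    rw [Finset.sum_congr rfl hterm, Finset.sum_add_distrib]
    have h1 : ∑ a ∈ piAntidiag (univ : Finset (Fin d)) k,
        N * nuC d k * ((Nat.multinomial univ a : ℂ) *
          (EE X a a + (starRingEnd ℂ) (EE X a a))) = 0 := by
      rw [← Finset.mul_sum]
      have : ∑ a ∈ piAntidiag (univ : Finset (Fin d)) k,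
          (Nat.multinomial univ a : ℂ) * (EE X a a + (starRingEnd ℂ) (EE X a a)) = 0 := by
        rw [Finset.sum_congr rfl (fun a _ => by ring :
          ∀ a ∈ piAntidiag (univ : Finset (Fin d)) k,
            (Nat.multinomial univ a : ℂ) * (EE X a a + (starRingEnd ℂ) (EE X a a))
            = (Nat.multinomial univ a : ℂ) * EE X a a
              + (Nat.multinomial univ a : ℂ) * (starRingEnd ℂ) (EE X a a)),
          Finset.sum_add_distrib, hEE, hEEc, add_zero]
      rw [this, mul_zero]
    have h2 : ∑ a ∈ piAntidiag (univ : Finset (Fin d)) k,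
        N^2 * nuC d k * ((Nat.multinomial univ a : ℂ) * monomialAvg d a a)
        = N^2 * nuC d k := by
      rw [← Finset.mul_sum, Finset.sum_congr rfl (fun a ha => mult_avg ha),
        Finset.sum_const, nsmul_eq_mul, card_nuC hd k, mul_one]
    rw [h1, h2, zero_add]
  · rw [if_neg hkl]
    refine Finset.sum_eq_zero fun a ha => Finset.sum_eq_zero fun b hb => ?_
    have hab : a ≠ b := by
      intro h
      apply hkl
      rw [← mem_A_sum ha, ← mem_A_sum hb, h]
    rw [avg_ne hab]
    ring

lemma bridge (X : Finset (Fin d → ℂ)) (j : ℕ) :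
    (2:ℂ)^j * ((Rj (X ×ˢ X) (fun p => (cInner p.1 p.2).re) j : ℝ) : ℂ)
      = ∑ k ∈ Finset.range (j+1), (j.choose k : ℂ) * PP X k (j-k) := by
  have hPP : ∀ k, (j.choose k : ℂ) * PP X k (j-k) = ∑ p ∈ X ×ˢ X,
      (j.choose k : ℂ) * (cInner p.1 p.2 ^ k *
        ((starRingEnd ℂ) (cInner p.1 p.2)) ^ (j-k)) := by
    intro k
    rw [PP, ← Finset.sum_product', Finset.mul_sum]
  simp only [hPP]
  rw [Finset.sum_comm, Rj]
  push_cast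
  rw [Finset.mul_sum]
  refine Finset.sum_congr rfl fun p _ => ?_
  have h2u : (2:ℂ) * (((cInner p.1 p.2).re : ℝ) : ℂ)
      = cInner p.1 p.2 + (starRingEnd ℂ) (cInner p.1 p.2) := by
    rw [Complex.add_conj]
    push_cast
    ring
  calc (2:ℂ)^j * (((cInner p.1 p.2).re : ℝ) : ℂ)^j
      = ((2:ℂ) * (((cInner p.1 p.2).re : ℝ) : ℂ))^j := by rw [mul_pow]
    _ = (cInner p.1 p.2 + (starRingEnd ℂ) (cInner p.1 p.2))^j := by rw [h2u]
    _ = ∑ k ∈ Finset.range (j+1), cInner p.1 p.2 ^ k *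
          ((starRingEnd ℂ) (cInner p.1 p.2)) ^ (j-k) * (j.choose k : ℂ) := add_pow _ _ _
    _ = _ := Finset.sum_congr rfl fun k _ => by ring

lemma diag_eval (hd : 1 ≤ d) (N : ℂ) (j : ℕ) :
    ∑ k ∈ Finset.range (j+1), (j.choose k : ℂ) * (if k = j-k then N^2 * nuC d k else 0)
      = (2:ℂ)^j * N^2 * ((nuE d j : ℝ) : ℂ) := by
  rcases Nat.even_or_odd j with ⟨s, hs⟩ | ⟨s, hs⟩
  · subst hs
    rw [Finset.sum_eq_single_of_mem s (by simp)]
    · rw [if_pos (by omega)]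
      have hchoose : ((s+s).choose s : ℂ) * (Nat.factorial s : ℂ) * (Nat.factorial s : ℂ)
          = (Nat.factorial (s+s) : ℂ) := by
        exact_mod_cast congrArg (fun n : ℕ => (n : ℂ))
          (by
            have := Nat.choose_mul_factorial_mul_factorial (show s ≤ s + s by omega)
            rw [show s + s - s = s from by omega] at this
            exact this)
      rw [show s + s = 2*s from by omega, nuE_two_mul]
      have hne1 : ((Nat.factorial (d + s - 1) : ℂ)) ≠ 0 := by
        exact_mod_cast Nat.factorial_ne_zero _
      have hne2 : ((Nat.factorial s : ℂ)) ≠ 0 := by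
        exact_mod_cast Nat.factorial_ne_zero _
      have hne3 : ((Nat.factorial (d - 1) : ℂ)) ≠ 0 := by
        exact_mod_cast Nat.factorial_ne_zero _
      have h4 : ((4:ℝ) : ℂ) = 4 := by norm_num
      have hpow : (2:ℂ)^(2*s) = 4^s := by
        rw [pow_mul]
        norm_num
      rw [nuC, hpow]
      push_cast
      rw [show 2*s = s+s from by omega] at *
      field_simp
      linear_combination N^2 * hchoose
    · intro k hk hks
      rw [if_neg (by simp at hk; omega), mul_zero]
  · subst hs
    rw [nuE_odd d _ (by omega)]
    rw [Finset.sum_eq_zero]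
    · push_cast
      ring
    intro k hk
    rw [if_neg (by simp at hk; omega), mul_zero]

def DesignM (t : ℕ) (X : Finset (Fin d → ℂ)) : Prop :=
  ∀ a b : Fin d → ℕ, (∑ i, a i) + (∑ i, b i) ≤ t →
    MM X a b = (X.card : ℂ) * monomialAvg d a b

lemma design_to_R (hd : 1 ≤ d) (t : ℕ) (X : Finset (Fin d → ℂ))
    (hX : ∀ z ∈ X, cInner z z = 1) (hD : DesignM t X) :
    ∀ j, j ≤ t → Rj (X ×ˢ X) (fun p => (cInner p.1 p.2).re) j
      = ((X.card : ℝ))^2 * nuE d j := by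
  intro j hj
  have hDD : ∀ k, k ≤ j → DD X k (j-k) = 0 := by
    intro k hk
    rw [DD]
    refine Finset.sum_eq_zero fun a ha => Finset.sum_eq_zero fun b hb => ?_
    have hE : EE X a b = 0 := by
      rw [EE, hD a b (by rw [mem_A_sum ha, mem_A_sum hb]; omega), sub_self]
    rw [hE]
    simp
  have hbr := bridge X j
  have hPP : ∀ k ∈ Finset.range (j+1), (j.choose k : ℂ) * PP X k (j-k)
      = (j.choose k : ℂ) * (if k = j-k then ((X.card : ℂ))^2 * nuC d k else 0) := by
    intro k hk
    rw [PP_decomp hd X hX, hDD k (by simp at hk; omega)]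
    push_cast
    ring
  rw [Finset.sum_congr rfl hPP, diag_eval hd _ j] at hbr
  have h2 : ((2:ℂ))^j ≠ 0 := by norm_num
  rw [mul_assoc] at hbr
  have := mul_left_cancel₀ h2 hbr
  have hcast : (((Rj (X ×ˢ X) (fun p => (cInner p.1 p.2).re) j : ℝ)) : ℂ)
      = ((((X.card : ℝ))^2 * nuE d j : ℝ) : ℂ) := by
    rw [this]
    push_cast
    ring
  exact_mod_cast hcast

lemma R_to_design (hd : 1 ≤ d) (t : ℕ) (X : Finset (Fin d → ℂ))
    (hX : ∀ z ∈ X, cInner z z = 1)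
    (hR : ∀ j, j ≤ t → Rj (X ×ˢ X) (fun p => (cInner p.1 p.2).re) j
      = ((X.card : ℝ))^2 * nuE d j) :
    DesignM t X := by
  intro a b hab
  set k := ∑ i, a i with hk
  set l := ∑ i, b i with hl
  set j := k + l with hj
  have hjt : j ≤ t := hab
  have hbr := bridge X j
  rw [hR j hjt] at hbr
  have hPP : ∀ k' ∈ Finset.range (j+1), (j.choose k' : ℂ) * PP X k' (j-k')
      = (j.choose k' : ℂ) * ((DD X k' (j-k') : ℝ) : ℂ)
        + (j.choose k' : ℂ) * (if k' = j-k' then ((X.card : ℂ))^2 * nuC d k' else 0) := by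
    intro k' _
    rw [PP_decomp hd X hX]
    ring
  rw [Finset.sum_congr rfl hPP, Finset.sum_add_distrib, diag_eval hd _ j] at hbr
  have hzero : ∑ k' ∈ Finset.range (j+1), (j.choose k' : ℂ) * ((DD X k' (j-k') : ℝ) : ℂ)
      = 0 := by
    have hca : ((2:ℂ))^j * ((((X.card : ℝ))^2 * nuE d j : ℝ) : ℂ)
        = (2:ℂ)^j * ((X.card : ℂ))^2 * ((nuE d j : ℝ) : ℂ) := by
      push_cast
      ring
    rw [hca] at hbr
    linear_combination (-1 : ℂ) * hbr
  have hzeroR : ∑ k' ∈ Finset.range (j+1), (j.choose k' : ℝ) * DD X k' (j-k') = 0 := by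
    exact_mod_cast hzero
  have hDDz : DD X k l = 0 := by
    have hterm := (Finset.sum_eq_zero_iff_of_nonneg (fun k' _ =>
      mul_nonneg (Nat.cast_nonneg _) (DD_nonneg X _ _))).1 hzeroR k
      (Finset.mem_range.2 (by omega))
    have hcp : ((j.choose k : ℝ)) ≠ 0 := by
      have := Nat.choose_pos (show k ≤ j by omega)
      positivity
    have := mul_eq_zero.1 hterm
    rcases this with h | h
    · exact absurd h hcp
    · rw [show j - k = l from by omega] at h
      exact h
  have hma : a ∈ piAntidiag (univ : Finset (Fin d)) k := mem_A k a rfl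
  have hmb : b ∈ piAntidiag (univ : Finset (Fin d)) l := mem_A l b rfl
  have hinner := (Finset.sum_eq_zero_iff_of_nonneg (fun a' _ =>
    Finset.sum_nonneg fun b' _ => mul_nonneg
      (mul_nonneg (Nat.cast_nonneg _) (Nat.cast_nonneg _)) (Complex.normSq_nonneg _))).1
    hDDz a hma
  have hterm2 := (Finset.sum_eq_zero_iff_of_nonneg (fun b' _ => mul_nonneg
      (mul_nonneg (Nat.cast_nonneg _) (Nat.cast_nonneg _)) (Complex.normSq_nonneg _))).1
    hinner b hmb
  have hmultpos : (0:ℝ) < (Nat.multinomial univ a : ℝ) * (Nat.multinomial univ b : ℝ) := by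
    have h1 := Nat.multinomial_pos (s := (univ : Finset (Fin d))) (f := a)
    have h2 := Nat.multinomial_pos (s := (univ : Finset (Fin d))) (f := b)
    positivity
  have hns : Complex.normSq (EE X a b) = 0 := by
    rcases mul_eq_zero.1 hterm2 with h | h
    · exact absurd h (ne_of_gt hmultpos)
    · exact h
  have hE0 : EE X a b = 0 := Complex.normSq_eq_zero.1 hns
  have := sub_eq_zero.1 hE0
  exact this

lemma design_iff (t : ℕ) (X : Finset (Fin d → ℂ)) :
    IsDesign d X (((Finset.range (t + 1)) ×ˢ (Finset.range (t + 1))).filter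
      fun p => p.1 + p.2 ≤ t) ↔ DesignM t X := by
  constructor
  · intro h a b hab
    have hmem : ((∑ i, a i), (∑ i, b i)) ∈ (((Finset.range (t + 1)) ×ˢ (Finset.range (t + 1))).filter
        fun p => p.1 + p.2 ≤ t) := by
      rw [Finset.mem_filter, Finset.mem_product, Finset.mem_range, Finset.mem_range]
      refine ⟨⟨?_, ?_⟩, ?_⟩ <;> omega
    exact h _ hmem a b rfl rfl
  · intro h kl hkl a b ha hb
    have hle : kl.1 + kl.2 ≤ t := (Finset.mem_filter.1 hkl).2
    exact h a b (by rw [ha, hb]; exact hle)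

lemma phi_inj (d : ℕ) : Function.Injective (phi d) := by
  intro x y h
  funext i
  apply Complex.ext
  · exact congrFun h (i, false)
  · exact congrFun h (i, true)

lemma phi_dot (x y : Fin d → ℂ) :
    ∑ p : Fin d × Bool, phi d x p * phi d y p = (cInner x y).re := by
  rw [cInner, Complex.re_sum, Fintype.sum_prod_type]
  refine Finset.sum_congr rfl fun i _ => ?_
  rw [Fintype.sum_bool]
  simp [phi, Complex.mul_re]
  ring

lemma image_sum (X : Finset (Fin d → ℂ)) (i : ℕ) :
    ∑ u ∈ X.image (phi d), ∑ v ∈ X.image (phi d),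
      gegen (2*d) i (∑ p : Fin d × Bool, u p * v p)
    = Sj (X ×ˢ X) (fun p => (cInner p.1 p.2).re) (2*d) 0 i := by
  rw [Finset.sum_image (fun x _ y _ h => phi_inj d h)]
  rw [Sj, Finset.sum_product]
  refine Finset.sum_congr rfl fun x _ => ?_
  rw [Finset.sum_image (fun x _ y _ h => phi_inj d h)]
  refine Finset.sum_congr rfl fun y _ => ?_
  rw [phi_dot, pow_zero, one_mul]

end Cplx

end Stmt5

open Stmt5


/-- `X ⊆ Ω(d)` is a complex spherical `{(k,l) : k+l ≤ t}`-design iff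
`φ(X)` is a real spherical `t`-design on `S^{2d-1}` (Gegenbauer characterization). -/
theorem stmt_5 {d : ℕ} (hd : 1 ≤ d) (X : Finset (Fin d → ℂ)) (hXne : X.Nonempty)
    (hXsphere : ∀ x ∈ X, cInner x x = 1) (t : ℕ) (ht : 1 ≤ t) :
    IsDesign d X
        (((Finset.range (t + 1)) ×ˢ (Finset.range (t + 1))).filter
          fun p => p.1 + p.2 ≤ t) ↔
      ∀ i : ℕ, 1 ≤ i → i ≤ t →
        ∑ u ∈ X.image (phi d), ∑ v ∈ X.image (phi d),
          gegen (2 * d) i (∑ p : Fin d × Bool, u p * v p) = 0 := by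
  constructor
  · intro hD i hi1 hit
    have hDm := (Stmt5.design_iff t X).1 hD
    have hR := Stmt5.design_to_R hd t X hXsphere hDm
    have hS := Stmt5.R_to_S d t hd ((X.card : ℝ)^2) hR i 0 (by omega)
    rw [Stmt5.TT_zero_left d i hi1, mul_zero] at hS
    rw [Stmt5.image_sum X i]
    exact hS
  · intro hq
    have hS0 : ∀ i, 1 ≤ i → i ≤ t →
        Stmt5.Sj (X ×ˢ X) (fun p => (cInner p.1 p.2).re) (2*d) 0 i = 0 := by
      intro i h1 h2
      rw [← Stmt5.image_sum X i]
      exact hq i h1 h2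
    have hS00 : Stmt5.Sj (X ×ˢ X) (fun p => (cInner p.1 p.2).re) (2*d) 0 0
        = ((X.card : ℝ))^2 := by
      rw [Stmt5.Sj_zero, Stmt5.Rj]
      simp only [pow_zero]
      rw [Finset.sum_const, Finset.card_product, nsmul_eq_mul]
      push_cast
      ring
    have hSR := Stmt5.S_to_R d t hd ((X.card : ℝ)^2) hS00 hS0
    have hR : ∀ j, j ≤ t → Stmt5.Rj (X ×ˢ X) (fun p => (cInner p.1 p.2).re) j
        = ((X.card : ℝ))^2 * Stmt5.nuE d j := by
      intro j hj
      have h := hSR j 0 (by omega)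
      rw [Stmt5.Sj_zero] at h
      rw [h, Stmt5.TT_zero_right]
    exact (Stmt5.design_iff t X).2 (Stmt5.R_to_design hd t X hXsphere hR)
end
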